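/- arXiv:math/0607218 — 4 statements merged into one kernel-verified Lean document; each statement's English description precedes it below -/
import Mathlib

section
/- Let λ be an uncountable regular cardinal and let D be a uniform ultrafilter on λ. Then the following are equivalent: (A) D is weakly reasonable; (B) for every increasing continuous sequence ⟨δ_ξ : ξ < λ⟩ of ordinals below λ there is a club C* of λ such that ∪{[δ_ξ, δ_{ξ+1}) : ξ ∈ C*} ∉ D; (C) for every club C of λ, the quotient D/C does not extend the filter generated by the club subsets of λ. -/
namespace RS889

noncomputable section

open Cardinal Set

universe u v

/-- `F` is a (proper) filter on the set `Z`, presented as the family of its members. -/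
def IsFilterOn {α : Type u} (F : Set (Set α)) (Z : Set α) : Prop :=
  (∀ A ∈ F, A ⊆ Z) ∧ Z ∈ F ∧
    (∀ A ∈ F, ∀ B, A ⊆ B → B ⊆ Z → B ∈ F) ∧
    (∀ A ∈ F, ∀ B ∈ F, A ∩ B ∈ F) ∧ ∅ ∉ F

/-- The family `F⁺` of `F`-positive subsets of `Z`. -/
def posOf {α : Type u} (F : Set (Set α)) (Z : Set α) : Set (Set α) :=
  {B | B ⊆ Z ∧ ∀ C ∈ F, (B ∩ C).Nonempty}

/-- `F` is an ultrafilter on the set `Z`. -/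
def IsUltraOn {α : Type u} (F : Set (Set α)) (Z : Set α) : Prop :=
  IsFilterOn F Z ∧ ∀ A ⊆ Z, A ∈ F ∨ Z \ A ∈ F

/-- An unultra filter: every positive set splits into two positive pieces. -/
def Unultra {α : Type u} (F : Set (Set α)) (Z : Set α) : Prop :=
  ∀ A ∈ posOf F Z, ∃ B ⊆ A, B ∈ posOf F Z ∧ A \ B ∈ posOf F Z

/-- The sum `⊕^E_{x ∈ X} Fx x` of the filters `Fx x` on the sets `Z x` over a filter `E` on `X`. -/
def filSum {α : Type u} {β : Type v} (X : Set α) (E : Set (Set α))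
    (Z : α → Set β) (Fx : α → Set (Set β)) : Set (Set β) :=
  {A | A ⊆ (⋃ x ∈ X, Z x) ∧ {x | x ∈ X ∧ Z x ∩ A ∈ Fx x} ∈ E}

/-- The sum `⊕_{ζ<ξ} F ζ` over the filter of co-bounded subsets of `ξ`. -/
def cobddSum {α : Type u} (ξ : Ordinal.{0}) (Z : Ordinal.{0} → Set α)
    (F : Ordinal.{0} → Set (Set α)) : Set (Set α) :=
  {A | A ⊆ (⋃ ζ ∈ Set.Iio ξ, Z ζ) ∧ ∃ β < ξ, ∀ ζ, β ≤ ζ → ζ < ξ → Z ζ ∩ A ∈ F ζ}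

/-- A triple `(α, Z, F)`: an ordinal, a set of ordinals and a family of subsets of `Z`
(intended to be a filter on `Z`). -/
structure LocalFilter : Type 1 where
  a : Ordinal.{0}
  Z : Set Ordinal.{0}
  F : Set (Set Ordinal.{0})

/-- A system of local filters on `lam`. -/
def IsLFS (lam : Cardinal.{0}) (S : Set LocalFilter) : Prop :=
  (∀ t ∈ S, t.Z ⊆ Set.Iio lam.ord ∧ #t.Z < Cardinal.lift.{1} lam ∧
      IsLeast t.Z t.a ∧ IsFilterOn t.F t.Z) ∧
    ∀ β < lam.ord, ∃ t ∈ S, β ≤ t.a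

/-- The family `Q*_lam(S)`. -/
def Qstar (lam : Cardinal.{0}) (S : Set LocalFilter) : Set (Set LocalFilter) :=
  {r | r ⊆ S ∧ #r = Cardinal.lift.{1} lam ∧
    ∀ ξ : Ordinal.{0}, #{t | t ∈ r ∧ t.a = ξ} < Cardinal.lift.{1} lam}

/-- The filter `fil(r)` on `lam` generated by `r`. -/
def fil (lam : Cardinal.{0}) (r : Set LocalFilter) : Set (Set Ordinal.{0}) :=
  {A | A ⊆ Set.Iio lam.ord ∧ ∃ ε < lam.ord, ∀ t ∈ r, ε ≤ t.a → A ∩ t.Z ∈ t.F}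

/-- `r` is strongly disjoint. -/
def StronglyDisjoint (r : Set LocalFilter) : Prop :=
  (∀ s ∈ r, ∀ t ∈ r, s.a = t.a → s = t) ∧
    ∀ s ∈ r, ∀ t ∈ r, s.a < t.a → s.Z ⊆ Set.Iio t.a

/-- The family `Q⁰_lam(S)` of strongly disjoint members of `Q*_lam(S)`. -/
def Qzero (lam : Cardinal.{0}) (S : Set LocalFilter) : Set (Set LocalFilter) :=
  {r | r ∈ Qstar lam S ∧ StronglyDisjoint r}

/-- `fil(H) = ⋃ { fil(r) : r ∈ H }`. -/
def filH (lam : Cardinal.{0}) (H : Set (Set LocalFilter)) : Set (Set Ordinal.{0}) :=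
  {A | ∃ r ∈ H, A ∈ fil lam r}

/-- A uniform family of subsets of `lam`: every member has cardinality `lam`. -/
def IsUniform (lam : Cardinal.{0}) (D : Set (Set Ordinal.{0})) : Prop :=
  ∀ A ∈ D, #A = Cardinal.lift.{1} lam

/-- `C` is a club (closed unbounded) subset of `lam`. -/
def IsClub (lam : Cardinal.{0}) (C : Set Ordinal.{0}) : Prop :=
  C ⊆ Set.Iio lam.ord ∧ (∀ β < lam.ord, ∃ γ ∈ C, β < γ) ∧
    ∀ δ, δ < lam.ord → δ ≠ 0 → (∀ β < δ, ∃ γ ∈ C, β < γ ∧ γ < δ) → δ ∈ C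

/-- `St` is stationary in `lam`. -/
def IsStationary (lam : Cardinal.{0}) (St : Set Ordinal.{0}) : Prop :=
  ∀ C, IsClub lam C → (St ∩ C).Nonempty

/-- `D` is a weakly reasonable (ultra)filter on `lam`. -/
def WeaklyReasonable (lam : Cardinal.{0}) (D : Set (Set Ordinal.{0})) : Prop :=
  ∀ f : Ordinal.{0} → Ordinal.{0},
    (∀ δ < lam.ord, f δ < lam.ord) →
    (∀ δ δ', δ ≤ δ' → δ' < lam.ord → f δ ≤ f δ') →
    (∀ β < lam.ord, ∃ δ < lam.ord, β ≤ f δ) →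
    ∃ C, IsClub lam C ∧ (⋃ δ ∈ C, Set.Ico δ (δ + f δ)) ∉ D

/-- `e` is the increasing enumeration of `C ∪ {0}` (in order type `lam`). -/
def IsEnum (lam : Cardinal.{0}) (C : Set Ordinal.{0}) (e : Ordinal.{0} → Ordinal.{0}) : Prop :=
  (∀ ξ η, ξ < η → η < lam.ord → e ξ < e η) ∧
    (∀ ξ < lam.ord, e ξ ∈ insert 0 C) ∧
    ∀ γ ∈ insert 0 C, ∃ ξ < lam.ord, e ξ = γ

/-- The quotient `D/C`, where `e` is the increasing enumeration of `C ∪ {0}`. -/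
def quotFil (lam : Cardinal.{0}) (D : Set (Set Ordinal.{0})) (e : Ordinal.{0} → Ordinal.{0}) :
    Set (Set Ordinal.{0}) :=
  {A | A ⊆ Set.Iio lam.ord ∧ (⋃ ξ ∈ A, Set.Ico (e ξ) (e (ξ + 1))) ∈ D}

/-- `d` is an increasing continuous sequence of ordinals below `lam` (indexed by `ξ < lam`). -/
def IncrCont (lam : Cardinal.{0}) (d : Ordinal.{0} → Ordinal.{0}) : Prop :=
  (∀ ξ < lam.ord, d ξ < lam.ord) ∧
    (∀ ξ η, ξ < η → η < lam.ord → d ξ < d η) ∧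
    ∀ δ, δ < lam.ord → Order.IsSuccLimit δ → ∀ β < d δ, ∃ ξ < δ, β ≤ d ξ

/-- The full system `𝓕^ult` of local non-principal ultrafilters on `lam`. -/
def Fult (lam : Cardinal.{0}) : Set LocalFilter :=
  {t | t.a < lam.ord ∧ t.a ∈ t.Z ∧ t.Z ⊆ {o | t.a ≤ o ∧ o < lam.ord} ∧
      t.Z.Infinite ∧ #t.Z < Cardinal.lift.{1} lam ∧ IsUltraOn t.F t.Z ∧
      ∀ x : Ordinal.{0}, ({x} : Set Ordinal.{0}) ∉ t.F}

/-- `Σ(p)`. -/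
def SigmaP (lam : Cardinal.{0}) (p : Set LocalFilter) : Set LocalFilter :=
  {t | t ∈ Fult lam ∧ ∀ A ∈ t.F, ∃ s ∈ p, A ∩ s.Z ∈ s.F}

/-- A linked family `H ⊆ Q*_lam`. -/
def Linked (lam : Cardinal.{0}) (H : Set (Set LocalFilter)) : Prop :=
  H.Nonempty ∧ ∀ S : Set (Set LocalFilter), S ⊆ H → S.Finite → S.Nonempty →
    #{α : Ordinal.{0} | ∃ t : LocalFilter, t.a = α ∧ ∀ p ∈ S, t ∈ SigmaP lam p} =
      Cardinal.lift.{1} lam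

/-- A big family `H ⊆ Q*_lam`. -/
def Big (lam : Cardinal.{0}) (H : Set (Set LocalFilter)) : Prop :=
  H.Nonempty ∧ ∀ D ⊆ Fult lam, ∃ q ∈ H, q ⊆ D ∨ q ∩ D = ∅

/-- The condition `(⊕)^sum_S`. -/
def SumCond (lam : Cardinal.{0}) (S : Set LocalFilter) : Prop :=
  ∀ κ : Cardinal.{0}, ℵ₀ ≤ κ → κ < lam →
    ∀ t : Ordinal.{0} → LocalFilter,
      (∀ ξ < κ.ord, t ξ ∈ S) →
      (∀ ξ ζ, ξ < ζ → ζ < κ.ord → (t ξ).Z ⊆ Set.Iio (t ζ).a) →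
      ∃ E : Set (Set Ordinal.{0}), IsFilterOn E (Set.Iio κ.ord) ∧
        (∀ A ∈ E, #A = Cardinal.lift.{1} κ) ∧
        (LocalFilter.mk (t 0).a (⋃ ξ ∈ Set.Iio κ.ord, (t ξ).Z)
          (filSum (Set.Iio κ.ord) E (fun ξ => (t ξ).Z) (fun ξ => (t ξ).F))) ∈ S

/-- `(<lam⁺)`-completeness of a subfamily `Q` of `Q*` with respect to `≤*`. -/
def Complete (lam : Cardinal.{0}) (Q : Set (Set LocalFilter)) : Prop :=
  ∀ γ : Ordinal.{0}, γ.card ≤ lam →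
    ∀ p : Ordinal.{0} → Set LocalFilter,
      (∀ ξ < γ, p ξ ∈ Q) →
      (∀ ξ ζ, ξ ≤ ζ → ζ < γ → fil lam (p ξ) ⊆ fil lam (p ζ)) →
      ∃ q ∈ Q, ∀ ξ < γ, fil lam (p ξ) ⊆ fil lam q

/-- The full system `𝓕₀` of co-bounded filters on `lam`. -/
def Fcobdd (lam : Cardinal.{0}) : Set LocalFilter :=
  {t | t.a ∈ t.Z ∧ t.Z ⊆ {o | t.a ≤ o ∧ o < lam.ord} ∧
      #t.Z < Cardinal.lift.{1} lam ∧ sSup t.Z ∉ t.Z ∧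
      t.F = {A | A ⊆ t.Z ∧ ∃ β < sSup t.Z, ∀ x ∈ t.Z, β ≤ x → x ∈ A}}

/-- The `Ē`-closure of a system `S` of local filters (as an inductive family:
it is closed under `E κ`-sums of `κ`-sequences of previously obtained triples). -/
inductive EClos (lam : Cardinal.{0}) (E : Cardinal.{0} → Set (Set Ordinal.{0}))
    (S : Set LocalFilter) : LocalFilter → Prop
  | base : ∀ t ∈ S, EClos lam E S t
  | sum : ∀ κ : Cardinal.{0}, ℵ₀ ≤ κ → κ < lam →
      ∀ t : Ordinal.{0} → LocalFilter,
        (∀ ξ < κ.ord, EClos lam E S (t ξ)) →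
        (∀ ξ ζ, ξ < ζ → ζ < κ.ord → (t ξ).Z ⊆ Set.Iio (t ζ).a) →
        EClos lam E S (LocalFilter.mk (t 0).a (⋃ ξ ∈ Set.Iio κ.ord, (t ξ).Z)
          (filSum (Set.Iio κ.ord) (E κ) (fun ξ => (t ξ).Z) (fun ξ => (t ξ).F)))

/-- The full system `𝓕^unu` of local unultra filters on `lam`. -/
def Funu (lam : Cardinal.{0}) : Set LocalFilter :=
  {t | t.Z.Nonempty ∧ t.Z ⊆ Set.Iio lam.ord ∧ #t.Z < Cardinal.lift.{1} lam ∧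
      IsLeast t.Z t.a ∧ IsFilterOn t.F t.Z ∧ Unultra t.F t.Z}

/-- A pararegularity system for `F` (on `Z`), indexed by finite subsets of `κ`. -/
def PRSystem (κ : Cardinal.{0}) (F : Set (Set Ordinal.{0})) (Z : Set Ordinal.{0}) : Prop :=
  ∃ A : Finset Ordinal.{0} → Set Ordinal.{0},
    (∀ u : Finset Ordinal.{0}, ↑u ⊆ Set.Iio κ.ord → A u ∈ F) ∧
    (∀ u v : Finset Ordinal.{0}, ↑v ⊆ Set.Iio κ.ord → u ⊆ v → A v ⊆ A u) ∧
    (∀ U : Set Ordinal.{0}, U ⊆ Set.Iio κ.ord → U.Infinite →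
      (⋂ ξ ∈ U, A {ξ}) = ∅) ∧
    F = {B | B ⊆ Z ∧ ∃ u : Finset Ordinal.{0}, ↑u ⊆ Set.Iio κ.ord ∧ A u ⊆ B}

/-- `F` is a pararegular filter on `Z` (with `α = min Z`). -/
def Pararegular (lam : Cardinal.{0}) (F : Set (Set Ordinal.{0})) (Z : Set Ordinal.{0})
    (α : Ordinal.{0}) : Prop :=
  ∃ κ : Cardinal.{0}, (Ordinal.omega0 + α).card ≤ κ ∧ κ < lam ∧ PRSystem κ F Z

/-- `F` is a strongly pararegular filter on `Z` (with `α = min Z`). -/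
def StronglyPararegular (lam : Cardinal.{0}) (F : Set (Set Ordinal.{0})) (Z : Set Ordinal.{0})
    (α : Ordinal.{0}) : Prop :=
  ∃ κ : Cardinal.{0}, 2 ^ (Ordinal.omega0 + α).card ≤ κ ∧ κ < lam ∧ PRSystem κ F Z

/-- The full system `𝓕^pr` of local pararegular filters on `lam`. -/
def Fpr (lam : Cardinal.{0}) : Set LocalFilter :=
  {t | t.Z.Infinite ∧ t.Z ⊆ Set.Iio lam.ord ∧ #t.Z < Cardinal.lift.{1} lam ∧
      IsLeast t.Z t.a ∧ IsFilterOn t.F t.Z ∧ Pararegular lam t.F t.Z t.a}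

/-- The full system `𝓕^spr` of local strongly pararegular filters on `lam`. -/
def Fspr (lam : Cardinal.{0}) : Set LocalFilter :=
  {t | t.Z.Infinite ∧ t.Z ⊆ Set.Iio lam.ord ∧ #t.Z < Cardinal.lift.{1} lam ∧
      IsLeast t.Z t.a ∧ IsFilterOn t.F t.Z ∧ StronglyPararegular lam t.F t.Z t.a}

/-- The space `^lam lam`. -/
def Fn (lam : Cardinal.{0}) : Type 1 := ↥(Set.Iio lam.ord) → ↥(Set.Iio lam.ord)

/-- The basic open set `O_s` determined by a partial function `s` of length `γ`. -/
def basicOpen (lam : Cardinal.{0}) (γ : Ordinal.{0}) (s : Ordinal.{0} → Ordinal.{0}) : Set (Fn lam) :=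
  {f | ∀ ξ : ↥(Set.Iio lam.ord), (ξ : Ordinal.{0}) < γ → ((f ξ : Ordinal.{0}) = s ξ)}

/-- `X ⊆ ^lam lam` is nowhere dense. -/
def NwDense (lam : Cardinal.{0}) (X : Set (Fn lam)) : Prop :=
  ∀ γ < lam.ord, ∀ s : Ordinal.{0} → Ordinal.{0}, (∀ ξ < γ, s ξ < lam.ord) →
    ∃ γ', γ ≤ γ' ∧ γ' < lam.ord ∧ ∃ s' : Ordinal.{0} → Ordinal.{0},
      (∀ ξ < γ', s' ξ < lam.ord) ∧ (∀ ξ < γ, s' ξ = s ξ) ∧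
      basicOpen lam γ' s' ∩ X = ∅

/-- `X` belongs to the ideal `M^lam_{lam,lam}`: it is covered by `lam` many
nowhere dense sets. -/
def MeagerSet (lam : Cardinal.{0}) (X : Set (Fn lam)) : Prop :=
  ∃ A : Ordinal.{0} → Set (Fn lam), (∀ ξ < lam.ord, NwDense lam (A ξ)) ∧
    X ⊆ ⋃ ξ ∈ Set.Iio lam.ord, A ξ

/-- `cov(M^lam_{lam,lam})`. -/
def covM (lam : Cardinal.{0}) : Cardinal.{1} :=
  sInf {c | ∃ 𝓐 : Set (Set (Fn lam)), (∀ X ∈ 𝓐, MeagerSet lam X) ∧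
    ⋃₀ 𝓐 = Set.univ ∧ #𝓐 = c}

/-- Nodes of trees of sequences of ordinals: a pair (level, function). -/
abbrev TNode : Type 1 := Ordinal.{0} × (Ordinal.{0} → Ordinal.{0})

/-- Truncation of a function below `γ` (with value `0` elsewhere). -/
def truncF (γ : Ordinal.{0}) (f : Ordinal.{0} → Ordinal.{0}) : Ordinal.{0} → Ordinal.{0} :=
  fun ξ => if ξ < γ then f ξ else 0

/-- `T` is a tree of height `lam` of (normalized) sequences of ordinals `< lam`. -/
def IsTree (lam : Cardinal.{0}) (T : Set TNode) : Prop :=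
  (∀ x ∈ T, x.1 < lam.ord ∧ (∀ ξ < x.1, x.2 ξ < lam.ord) ∧ x.2 = truncF x.1 x.2) ∧
    ∀ x ∈ T, ∀ γ ≤ x.1, (γ, truncF γ x.2) ∈ T

/-- The `γ`-th level of `T`. -/
def treeLevel (T : Set TNode) (γ : Ordinal.{0}) : Set TNode := {x | x ∈ T ∧ x.1 = γ}

/-- `T` is a `lam`-Kurepa tree: a tree of height `lam` all of whose levels are
nonempty of cardinality `< lam`. -/
def IsKurepaTree (lam : Cardinal.{0}) (T : Set TNode) : Prop :=
  IsTree lam T ∧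
    ∀ γ < lam.ord, (treeLevel T γ).Nonempty ∧
      #(treeLevel T γ) < Cardinal.lift.{1} lam

/-- The set of `lam`-branches of `T` (normalized functions all of whose proper
initial segments lie in `T`). -/
def branches (lam : Cardinal.{0}) (T : Set TNode) : Set (Ordinal.{0} → Ordinal.{0}) :=
  {f | f = truncF lam.ord f ∧ ∀ γ < lam.ord, (γ, truncF γ f) ∈ T}


section ObsAux

variable {lam : Cardinal.{0}}

private lemma ord_pos (hunc : ℵ₀ < lam) : (0 : Ordinal) < lam.ord := by
  rw [Cardinal.lt_ord]
  simpa using aleph0_pos.trans hunc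

private lemma ord_limit (hunc : ℵ₀ < lam) : Order.IsSuccLimit lam.ord :=
  Cardinal.isSuccLimit_ord hunc.le

private lemma lt_add_one' (a : Ordinal) : a < a + 1 := by
  rw [Ordinal.add_one_eq_succ]; exact Order.lt_succ a

private lemma succ_lt_ord (hunc : ℵ₀ < lam) {ξ : Ordinal} (h : ξ < lam.ord) :
    ξ + 1 < lam.ord := by
  rw [Ordinal.add_one_eq_succ]; exact (ord_limit hunc).succ_lt h

private lemma add_lt_ord (hreg : lam.IsRegular) {a b : Ordinal}
    (ha : a < lam.ord) (hb : b < lam.ord) : a + b < lam.ord := by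
  rw [Cardinal.lt_ord] at ha hb ⊢
  rw [Ordinal.card_add]
  exact Cardinal.add_lt_of_lt hreg.aleph0_le ha hb

private lemma iSup_nat_lt_ord (hreg : lam.IsRegular) (hunc : ℵ₀ < lam)
    {g : ℕ → Ordinal.{0}} (hg : ∀ n, g n < lam.ord) : (⨆ n, g n) < lam.ord :=
  Cardinal.iSup_lt_ord_of_isRegular hreg (by rw [Cardinal.mk_nat]; exact hunc) hg

private lemma sm_le_self {Λ : Ordinal} {d : Ordinal → Ordinal}
    (hm : ∀ ξ η, ξ < η → η < Λ → d ξ < d η) : ∀ ξ < Λ, ξ ≤ d ξ := by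
  intro ξ
  induction ξ using Ordinal.induction with
  | h ξ IH =>
    intro hξ
    by_contra hc
    push_neg at hc
    exact absurd (hm (d ξ) ξ hc hξ) (not_lt.mpr (IH (d ξ) hc (hc.trans hξ)))

private lemma sm_reflect {Λ : Ordinal} {d : Ordinal → Ordinal}
    (hm : ∀ ξ η, ξ < η → η < Λ → d ξ < d η) {ξ η : Ordinal}
    (hξ : ξ < Λ) (h : d ξ < d η) : ξ < η := by
  by_contra hc
  push_neg at hc
  rcases eq_or_lt_of_le hc with rfl | hlt
  · exact lt_irrefl _ h
  · exact absurd (hm η ξ hlt hξ) (not_lt.mpr h.le)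

private lemma sm_mono {Λ : Ordinal} {d : Ordinal → Ordinal}
    (hm : ∀ ξ η, ξ < η → η < Λ → d ξ < d η) {ξ η : Ordinal}
    (h : ξ ≤ η) (hη : η < Λ) : d ξ ≤ d η := by
  rcases eq_or_lt_of_le h with rfl | hlt
  · exact le_rfl
  · exact (hm ξ η hlt hη).le

private lemma club_above {C : Set Ordinal} (hC : IsClub lam C) {β : Ordinal}
    (hβ : β < lam.ord) : ∃ γ, γ ∈ C ∧ β < γ ∧ γ < lam.ord := by
  obtain ⟨γ, hγC, hγ⟩ := hC.2.1 β hβ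
  exact ⟨γ, hγC, hγ, hC.1 hγC⟩

private lemma club_choice {C : Set Ordinal} (hC : IsClub lam C) :
    ∃ u : Ordinal → Ordinal, ∀ x, x < lam.ord → u x ∈ C ∧ x < u x ∧ u x < lam.ord := by
  have hex : ∀ x : Ordinal, ∃ γ, x < lam.ord → (γ ∈ C ∧ x < γ ∧ γ < lam.ord) := by
    intro x
    by_cases h : x < lam.ord
    · obtain ⟨γ, hγ⟩ := club_above hC h
      exact ⟨γ, fun _ => hγ⟩
    · exact ⟨0, fun h' => absurd h' h⟩
  choose u hu using hex
  exact ⟨u, hu⟩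

private lemma club_inter (hreg : lam.IsRegular) (hunc : ℵ₀ < lam) {C C' : Set Ordinal}
    (hC : IsClub lam C) (hC' : IsClub lam C') : IsClub lam (C ∩ C') := by
  obtain ⟨u, hu⟩ := club_choice hC
  obtain ⟨u', hu'⟩ := club_choice hC'
  refine ⟨fun x hx => hC.1 hx.1, ?_, ?_⟩
  · intro β hβ
    set g : ℕ → Ordinal := fun n => Nat.rec β (fun _ x => u' (u x)) n with hgdef
    have hstep : ∀ n, g (n + 1) = u' (u (g n)) := fun n => rfl
    have hlt : ∀ n, g n < lam.ord := by
      intro n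
      induction n with
      | zero => exact hβ
      | succ n ih =>
        rw [hstep]
        exact (hu' _ (hu _ ih).2.2).2.2
    have hmono : ∀ n, g n < g (n + 1) := by
      intro n
      rw [hstep]
      exact ((hu _ (hlt n)).2.1).trans (hu' _ (hu _ (hlt n)).2.2).2.1
    have hδlt : (⨆ n, g n) < lam.ord := iSup_nat_lt_ord hreg hunc hlt
    set δ := ⨆ n, g n with hδ
    have hglδ : ∀ n, g n < δ := fun n => lt_of_lt_of_le (hmono n) (Ordinal.le_iSup g (n + 1))
    have hlp : ∀ β' < δ, ∃ n, β' < g n := by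
      intro β' hβ'
      rwa [hδ, Ordinal.lt_iSup_iff] at hβ'
    have hδpos : δ ≠ 0 := by
      intro h
      have := hglδ 0
      rw [h] at this
      exact absurd this (not_lt_of_ge zero_le)
    have hCmem : δ ∈ C := by
      refine hC.2.2 δ hδlt hδpos ?_
      intro β' hβ'
      obtain ⟨n, hn⟩ := hlp β' hβ'
      refine ⟨u (g n), (hu _ (hlt n)).1, hn.trans (hu _ (hlt n)).2.1, ?_⟩
      have h2 : u (g n) < g (n + 1) := by
        rw [hstep]
        exact (hu' _ (hu _ (hlt n)).2.2).2.1
      exact h2.trans (hglδ (n + 1))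
    have hC'mem : δ ∈ C' := by
      refine hC'.2.2 δ hδlt hδpos ?_
      intro β' hβ'
      obtain ⟨n, hn⟩ := hlp β' hβ'
      refine ⟨g (n + 1), ?_, hn.trans (hmono n), hglδ (n + 1)⟩
      rw [hstep]
      exact (hu' _ (hu _ (hlt n)).2.2).1
    exact ⟨δ, ⟨hCmem, hC'mem⟩, hglδ 0⟩
  · intro δ hδ hδ0 hlim
    constructor
    · refine hC.2.2 δ hδ hδ0 fun β hβ => ?_
      obtain ⟨γ, hγ, h1, h2⟩ := hlim β hβ
      exact ⟨γ, hγ.1, h1, h2⟩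
    · refine hC'.2.2 δ hδ hδ0 fun β hβ => ?_
      obtain ⟨γ, hγ, h1, h2⟩ := hlim β hβ
      exact ⟨γ, hγ.2, h1, h2⟩

private lemma club_Iio (hunc : ℵ₀ < lam) : IsClub lam (Set.Iio lam.ord) :=
  ⟨subset_rfl, fun β hβ => ⟨β + 1, succ_lt_ord hunc hβ, lt_add_one' β⟩,
    fun _ hδ _ _ => hδ⟩

private lemma club_image (hreg : lam.IsRegular) (hunc : ℵ₀ < lam)
    {d : Ordinal → Ordinal} (hd : IncrCont lam d) {C' : Set Ordinal}
    (hC' : IsClub lam C') : IsClub lam (d '' C') := by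
  obtain ⟨hv, hm, hcont⟩ := hd
  have hself := sm_le_self hm
  refine ⟨?_, ?_, ?_⟩
  · rintro _ ⟨ξ, hξ, rfl⟩
    exact hv ξ (hC'.1 hξ)
  · intro β hβ
    obtain ⟨ξ, hξ, h1, h2⟩ := club_above hC' hβ
    exact ⟨d ξ, ⟨ξ, hξ, rfl⟩, lt_of_lt_of_le h1 (hself ξ h2)⟩
  · intro δ hδΛ hδ0 hlim
    set T := {ξ | ξ ∈ C' ∧ d ξ < δ} with hT
    have hTsub : ∀ ξ ∈ T, ξ < δ := fun ξ hξ =>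
      lt_of_le_of_lt (hself ξ (hC'.1 hξ.1)) hξ.2
    have hbdd : BddAbove T := ⟨δ, fun ξ hξ => (hTsub ξ hξ).le⟩
    have hG : ∀ β < δ, ∃ ξ ∈ T, β < d ξ := by
      intro β hβ
      obtain ⟨γ, hγ, h1, h2⟩ := hlim β hβ
      obtain ⟨ξ, hξ, rfl⟩ := hγ
      exact ⟨ξ, ⟨hξ, h2⟩, h1⟩
    have hTne : T.Nonempty := by
      obtain ⟨ξ, hξ, _⟩ := hG 0 (pos_iff_ne_zero.mpr hδ0)
      exact ⟨ξ, hξ⟩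
    have hnomax : ∀ ξ ∈ T, ∃ ξ' ∈ T, ξ < ξ' := by
      intro ξ hξ
      obtain ⟨ξ', hξ', h⟩ := hG (d ξ) hξ.2
      exact ⟨ξ', hξ', sm_reflect hm (hC'.1 hξ.1) h⟩
    set η := sSup T with hη
    have hηδ : η ≤ δ := csSup_le hTne fun ξ hξ => (hTsub ξ hξ).le
    have hηΛ : η < lam.ord := lt_of_le_of_lt hηδ hδΛ
    have hex : ∀ β < η, ∃ ξ ∈ T, β < ξ := by
      intro β hβ
      by_contra h
      push_neg at h
      exact absurd (csSup_le hTne h) (not_le.mpr hβ)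
    have hex' : ∀ β < η, ∃ ξ ∈ T, β < ξ ∧ ξ < η := by
      intro β hβ
      obtain ⟨ξ, hξ, h1⟩ := hex β hβ
      obtain ⟨ξ', hξ', h2⟩ := hnomax ξ hξ
      exact ⟨ξ, hξ, h1, lt_of_lt_of_le h2 (le_csSup hbdd hξ')⟩
    have hη0 : η ≠ 0 := by
      obtain ⟨ξ, hξ⟩ := hTne
      obtain ⟨ξ', hξ', h2⟩ := hnomax ξ hξ
      have : 0 < η := lt_of_le_of_lt zero_le
        (lt_of_lt_of_le h2 (le_csSup hbdd hξ'))
      exact this.ne'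
    have hηC' : η ∈ C' := by
      refine hC'.2.2 η hηΛ hη0 fun β hβ => ?_
      obtain ⟨ξ, hξ, h1, h2⟩ := hex' β hβ
      exact ⟨ξ, hξ.1, h1, h2⟩
    have hηlim : Order.IsSuccLimit η := by
      refine Ordinal.isSuccLimit_iff.mpr ⟨hη0, Order.isSuccPrelimit_of_succ_lt fun α hα => ?_⟩
      obtain ⟨ξ, _, h1, h2⟩ := hex' α hα
      exact lt_of_le_of_lt (Order.succ_le_of_lt h1) h2
    have hdlt : ∀ ξ < η, d ξ < δ := by
      intro ξ hξ
      obtain ⟨ξ', hξ', h⟩ := hex ξ hξ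
      exact lt_trans (hm ξ ξ' h (hC'.1 hξ'.1)) hξ'.2
    have hle : d η ≤ δ := by
      by_contra h
      push_neg at h
      obtain ⟨ξ, hξη, hβ⟩ := hcont η hηΛ hηlim δ h
      exact absurd (hdlt ξ hξη) (not_lt.mpr hβ)
    have hge : δ ≤ d η := by
      by_contra h
      push_neg at h
      obtain ⟨ξ, hξT, hgt⟩ := hG (d η) h
      exact absurd hgt (not_lt.mpr (sm_mono hm (le_csSup hbdd hξT) hηΛ))
    exact ⟨η, hηC', le_antisymm hle hge⟩

private lemma club_preimage (hreg : lam.IsRegular) (hunc : ℵ₀ < lam)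
    {d : Ordinal → Ordinal} (hd : IncrCont lam d) {C : Set Ordinal}
    (hC : IsClub lam C) : IsClub lam {ξ | ξ < lam.ord ∧ d ξ ∈ C} := by
  have himg : IsClub lam (C ∩ d '' Set.Iio lam.ord) :=
    club_inter hreg hunc hC (club_image hreg hunc hd (club_Iio hunc))
  refine ⟨fun ξ hξ => hξ.1, ?_, ?_⟩
  · intro β hβ
    obtain ⟨γ, hγ, hβγ, hγΛ⟩ := club_above himg (hd.1 β hβ)
    obtain ⟨hγC, ξ, hξ, rfl⟩ := hγ
    exact ⟨ξ, ⟨hξ, hγC⟩, sm_reflect hd.2.1 hβ hβγ⟩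
  · intro δ hδΛ hδ0 hlim
    have hδlim : Order.IsSuccLimit δ := by
      refine Ordinal.isSuccLimit_iff.mpr ⟨hδ0, Order.isSuccPrelimit_of_succ_lt fun α hα => ?_⟩
      obtain ⟨γ, _, h1, h2⟩ := hlim α hα
      exact lt_of_le_of_lt (Order.succ_le_of_lt h1) h2
    refine ⟨hδΛ, hC.2.2 (d δ) (hd.1 δ hδΛ) ?_ ?_⟩
    · obtain ⟨γ, hγ, h1, h2⟩ := hlim 0 (pos_iff_ne_zero.mpr hδ0)
      have h3 : d γ < d δ := hd.2.1 γ δ h2 hδΛ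
      have : 0 < d δ := lt_of_le_of_lt zero_le h3
      exact this.ne'
    · intro β hβ
      obtain ⟨ξ, hξδ, hβξ⟩ := hd.2.2 δ hδΛ hδlim β hβ
      obtain ⟨γ, hγ, h1, h2⟩ := hlim ξ hξδ
      exact ⟨d γ, hγ.2, lt_of_le_of_lt hβξ (hd.2.1 ξ γ h1 hγ.1), hd.2.1 γ δ h2 hδΛ⟩

private lemma club_closurePoints (hreg : lam.IsRegular) (hunc : ℵ₀ < lam)
    {f : Ordinal → Ordinal} (hv : ∀ δ < lam.ord, f δ < lam.ord)
    (hmono : ∀ δ δ', δ ≤ δ' → δ' < lam.ord → f δ ≤ f δ') :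
    IsClub lam {δ | δ < lam.ord ∧ 0 < δ ∧ ∀ β < δ, β + f β < δ} := by
  refine ⟨fun δ hδ => hδ.1, ?_, ?_⟩
  · intro β hβ
    set g : ℕ → Ordinal := fun n => Nat.rec (β + 1) (fun _ x => x + f x + 1) n with hgdef
    have hstep : ∀ n, g (n + 1) = g n + f (g n) + 1 := fun n => rfl
    have hlt : ∀ n, g n < lam.ord := by
      intro n
      induction n with
      | zero => exact succ_lt_ord hunc hβ
      | succ n ih =>
        rw [hstep]
        exact succ_lt_ord hunc (add_lt_ord hreg ih (hv _ ih))
    have hmonog : ∀ n, g n < g (n + 1) := by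
      intro n
      rw [hstep]
      exact lt_of_le_of_lt (le_self_add) (lt_add_one' _)
    have hδΛ : (⨆ n, g n) < lam.ord := iSup_nat_lt_ord hreg hunc hlt
    set δ := ⨆ n, g n with hδdef
    have hgδ : ∀ n, g n < δ := fun n =>
      lt_of_lt_of_le (hmonog n) (Ordinal.le_iSup g (n + 1))
    refine ⟨δ, ⟨hδΛ, ?_, ?_⟩, lt_trans (lt_add_one' β) (hgδ 0)⟩
    · exact lt_of_le_of_lt zero_le (hgδ 0)
    · intro β' hβ'
      rw [hδdef, Ordinal.lt_iSup_iff] at hβ'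
      obtain ⟨n, hn⟩ := hβ'
      have h1 : β' + f β' ≤ g n + f (g n) :=
        le_trans (add_le_add_left hn.le _) (add_le_add le_rfl (hmono β' (g n) hn.le (hlt n)))
      calc β' + f β' ≤ g n + f (g n) := h1
        _ < g (n + 1) := by rw [hstep]; exact lt_add_one' _
        _ < δ := hgδ (n + 1)
  · intro δ hδΛ hδ0 hlim
    refine ⟨hδΛ, pos_iff_ne_zero.mpr hδ0, ?_⟩
    intro β hβ
    obtain ⟨γ, hγ, h1, h2⟩ := hlim β hβ
    exact lt_trans (hγ.2.2 β h1) h2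

private lemma exists_enum (hreg : lam.IsRegular) (hunc : ℵ₀ < lam)
    {E : Set Ordinal} (hE : IsClub lam E) : ∃ e, IsEnum lam E e := by
  classical
  set S := insert 0 E ∪ Set.Ici lam.ord with hS
  have hSub : ¬ BddAbove S := by
    rintro ⟨b, hb⟩
    have hx : max (b + 1) lam.ord ∈ S := Set.mem_union_right _ (Set.mem_Ici.mpr (le_max_right _ _))
    have h1 : b + 1 ≤ b := le_trans (le_max_left _ _) (hb hx)
    exact absurd h1 (not_le.mpr (lt_add_one' b))
  have hkey : ∀ ξ < lam.ord, Ordinal.enumOrd S ξ < lam.ord := by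
    intro ξ
    induction ξ using Ordinal.induction with
    | h ξ IH =>
      intro hξ
      have ht : Ordinal.bsup ξ (fun η _ => Ordinal.enumOrd S η + 1) < lam.ord :=
        Cardinal.bsup_lt_ord_of_isRegular hreg (Cardinal.lt_ord.mp hξ)
          (fun η hη => succ_lt_ord hunc (IH η hη (hη.trans hξ)))
      obtain ⟨γ, hγE, hγt, hγΛ⟩ := club_above hE ht
      have hγS : γ ∈ S := Set.mem_union_left _ (Set.mem_insert_of_mem _ hγE)
      have hle : Ordinal.enumOrd S ξ ≤ γ := by
        refine Ordinal.enumOrd_le_of_forall_lt hγS ?_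
        intro η hη
        calc Ordinal.enumOrd S η < Ordinal.enumOrd S η + 1 := lt_add_one' _
          _ ≤ Ordinal.bsup ξ (fun η _ => Ordinal.enumOrd S η + 1) := Ordinal.le_bsup _ η hη
          _ < γ := hγt
      exact lt_of_le_of_lt hle hγΛ
  refine ⟨Ordinal.enumOrd S, ?_, ?_, ?_⟩
  · exact fun ξ η h _ => Ordinal.enumOrd_strictMono hSub h
  · intro ξ hξ
    rcases Ordinal.enumOrd_mem hSub ξ with h | h
    · exact h
    · exact absurd (hkey ξ hξ) (not_lt.mpr h)
  · intro γ hγ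
    have hγS : γ ∈ S := Set.mem_union_left _ hγ
    have : γ ∈ Set.range (Ordinal.enumOrd S) := by
      rw [Ordinal.range_enumOrd hSub]
      exact hγS
    obtain ⟨ξ, rfl⟩ := this
    have hγΛ : Ordinal.enumOrd S ξ < lam.ord := by
      rcases Set.mem_insert_iff.mp hγ with h0 | h
      · rw [h0]; exact ord_pos hunc
      · exact hE.1 h
    exact ⟨ξ, lt_of_le_of_lt (Ordinal.le_enumOrd_self hSub) hγΛ, rfl⟩

private lemma isEnum_incrCont (hreg : lam.IsRegular) (hunc : ℵ₀ < lam)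
    {C : Set Ordinal} (hC : IsClub lam C) {e : Ordinal → Ordinal}
    (he : IsEnum lam C e) : IncrCont lam e := by
  obtain ⟨hm, hmem, hsurj⟩ := he
  have hv : ∀ ξ < lam.ord, e ξ < lam.ord := by
    intro ξ hξ
    rcases Set.mem_insert_iff.mp (hmem ξ hξ) with h | h
    · rw [h]; exact ord_pos hunc
    · exact hC.1 h
  refine ⟨hv, hm, ?_⟩
  intro δ hδΛ hδlim β hβ
  by_contra h
  push_neg at h
  set s := Ordinal.bsup δ (fun ξ _ => e ξ) with hs
  have hsΛ : s < lam.ord :=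
    Cardinal.bsup_lt_ord_of_isRegular hreg (Cardinal.lt_ord.mp hδΛ)
      (fun ξ hξ => hv ξ (hξ.trans hδΛ))
  have hles : ∀ ξ, (hξ : ξ < δ) → e ξ ≤ s := fun ξ hξ => Ordinal.le_bsup _ ξ hξ
  have hlts : ∀ ξ < δ, e ξ < s := by
    intro ξ hξ
    have h1 : ξ + 1 < δ := by
      rw [Ordinal.add_one_eq_succ]; exact hδlim.succ_lt hξ
    exact lt_of_lt_of_le (hm ξ (ξ + 1) (lt_add_one' ξ) (h1.trans hδΛ)) (hles _ h1)
  have hspos : 0 < s :=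
    lt_of_le_of_lt zero_le (hlts 0 hδlim.pos)
  have hsC : s ∈ C := by
    refine hC.2.2 s hsΛ hspos.ne' ?_
    intro β' hβ'
    rw [hs, Ordinal.lt_bsup] at hβ'
    obtain ⟨ξ, hξ, hβξ⟩ := hβ'
    rcases Set.mem_insert_iff.mp (hmem ξ (hξ.trans hδΛ)) with h0 | hmemC
    · rw [h0] at hβξ; exact absurd hβξ (not_lt_of_ge zero_le)
    · exact ⟨e ξ, hmemC, hβξ, hlts ξ hξ⟩
  obtain ⟨η, hηΛ, hηs⟩ := hsurj s (Set.mem_insert_of_mem _ hsC)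
  have hηδ : δ ≤ η := by
    by_contra hc
    push_neg at hc
    have := hlts η hc
    rw [hηs] at this
    exact lt_irrefl _ this
  have heδ : e δ ≤ s := by
    rcases eq_or_lt_of_le hηδ with rfl | hlt
    · exact hηs.le
    · rw [← hηs]
      exact (hm δ η hlt hηΛ).le
  have hβs : β < s := lt_of_lt_of_le hβ heδ
  rw [hs, Ordinal.lt_bsup] at hβs
  obtain ⟨ξ, hξ, hβξ⟩ := hβs
  exact absurd hβξ (not_lt.mpr (h ξ hξ).le)

end ObsAux

/-- Observation 1.2: for a uniform ultrafilter `D` on an uncountable regular cardinal `lam`,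
weak reasonability is equivalent to conditions (B) and (C). -/
theorem stmt0 (lam : Cardinal.{0}) (hreg : lam.IsRegular) (hunc : ℵ₀ < lam)
    (D : Set (Set Ordinal.{0}))
    (hD : IsUltraOn D (Set.Iio lam.ord)) (hU : IsUniform lam D) :
    (WeaklyReasonable lam D ↔
      ∀ d : Ordinal.{0} → Ordinal.{0}, IncrCont lam d →
        ∃ C, IsClub lam C ∧ (⋃ ξ ∈ C, Set.Ico (d ξ) (d (ξ + 1))) ∉ D) ∧
    (WeaklyReasonable lam D ↔
      ∀ C, IsClub lam C → ∀ e, IsEnum lam C e →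
        ¬ ∀ A ⊆ Set.Iio lam.ord,
            (∃ C', IsClub lam C' ∧ C' ⊆ A) → A ∈ quotFil lam D e) := by
  classical
  have hup : ∀ A ∈ D, ∀ B, A ⊆ B → B ⊆ Set.Iio lam.ord → B ∈ D := hD.1.2.2.1
  -- (A) → (B)
  have hAB : WeaklyReasonable lam D → ∀ d : Ordinal.{0} → Ordinal.{0}, IncrCont lam d →
      ∃ C, IsClub lam C ∧ (⋃ ξ ∈ C, Set.Ico (d ξ) (d (ξ + 1))) ∉ D := by
    intro hA d hd
    have hself := sm_le_self hd.2.1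
    set g : Ordinal → Ordinal := fun δ => sInf {ζ | ζ < lam.ord ∧ δ ≤ d ζ} with hg
    have hgmem : ∀ δ < lam.ord, g δ < lam.ord ∧ δ ≤ d (g δ) := by
      intro δ hδ
      exact csInf_mem (⟨δ, hδ, hself δ hδ⟩ : {ζ | ζ < lam.ord ∧ δ ≤ d ζ}.Nonempty)
    set f : Ordinal → Ordinal := fun δ => if h : δ < lam.ord then d (g δ + 1) else 0 with hf
    have hfval : ∀ δ < lam.ord, f δ = d (g δ + 1) := by
      intro δ h
      rw [hf]
      simp [h]
    have hf1 : ∀ δ < lam.ord, f δ < lam.ord := by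
      intro δ h
      rw [hfval δ h]
      exact hd.1 _ (succ_lt_ord hunc (hgmem δ h).1)
    have hgmono : ∀ δ δ', δ ≤ δ' → δ' < lam.ord → g δ ≤ g δ' := by
      intro δ δ' h h'
      refine le_csInf ⟨δ', h', hself δ' h'⟩ fun ζ hζ => ?_
      exact csInf_le (OrderBot.bddBelow _) ⟨hζ.1, h.trans hζ.2⟩
    have hf2 : ∀ δ δ', δ ≤ δ' → δ' < lam.ord → f δ ≤ f δ' := by
      intro δ δ' h h'
      rw [hfval δ (lt_of_le_of_lt h h'), hfval δ' h']
      exact sm_mono hd.2.1 (add_le_add_left (hgmono δ δ' h h') 1)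
        (succ_lt_ord hunc (hgmem δ' h').1)
    have hf3 : ∀ β < lam.ord, ∃ δ < lam.ord, β ≤ f δ := by
      intro β hβ
      refine ⟨d β, hd.1 β hβ, ?_⟩
      rw [hfval _ (hd.1 β hβ)]
      have h1 : d β ≤ d (g (d β)) := (hgmem _ (hd.1 β hβ)).2
      have h2 : d (g (d β)) < d (g (d β) + 1) :=
        hd.2.1 _ _ (lt_add_one' _) (succ_lt_ord hunc (hgmem _ (hd.1 β hβ)).1)
      exact le_of_lt (lt_of_le_of_lt ((hself β hβ).trans h1) h2)
    obtain ⟨C, hC, hCD⟩ := hA f hf1 hf2 hf3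
    refine ⟨{ξ | ξ < lam.ord ∧ d ξ ∈ C}, club_preimage hreg hunc hd hC, fun hmem => ?_⟩
    apply hCD
    refine hup _ hmem _ ?_ ?_
    · intro x hx
      rw [Set.mem_iUnion₂] at hx ⊢
      obtain ⟨ξ, ⟨hξΛ, hξC⟩, hx⟩ := hx
      refine ⟨d ξ, hξC, ?_⟩
      have hgval : g (d ξ) = ξ := by
        apply le_antisymm
        · exact csInf_le (OrderBot.bddBelow _) ⟨hξΛ, le_rfl⟩
        · refine le_csInf ⟨ξ, hξΛ, le_rfl⟩ fun ζ hζ => ?_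
          by_contra hc
          push_neg at hc
          exact absurd (hd.2.1 ζ ξ hc hξΛ) (not_lt.mpr hζ.2)
      rw [Set.mem_Ico] at hx ⊢
      rw [hfval _ (hd.1 ξ hξΛ), hgval]
      exact ⟨hx.1, lt_of_lt_of_le hx.2 le_add_self⟩
    · intro x hx
      rw [Set.mem_iUnion₂] at hx
      obtain ⟨δ, hδ, hx⟩ := hx
      exact lt_trans hx.2 (add_lt_ord hreg (hC.1 hδ) (hf1 δ (hC.1 hδ)))
  -- (B) → (A)
  have hBA : (∀ d : Ordinal.{0} → Ordinal.{0}, IncrCont lam d →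
      ∃ C, IsClub lam C ∧ (⋃ ξ ∈ C, Set.Ico (d ξ) (d (ξ + 1))) ∉ D) →
      WeaklyReasonable lam D := by
    intro hB f hf1 hf2 hf3
    have hE : IsClub lam {δ | δ < lam.ord ∧ 0 < δ ∧ ∀ β < δ, β + f β < δ} :=
      club_closurePoints hreg hunc hf1 hf2
    obtain ⟨e, he⟩ := exists_enum hreg hunc hE
    have hie := isEnum_incrCont hreg hunc hE he
    obtain ⟨C', hC', hUD⟩ := hB e hie
    refine ⟨e '' C', club_image hreg hunc hie hC', fun hmem => ?_⟩
    apply hUD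
    refine hup _ hmem _ ?_ ?_
    · intro x hx
      rw [Set.mem_iUnion₂] at hx ⊢
      obtain ⟨δ, ⟨ξ, hξ, rfl⟩, hx⟩ := hx
      refine ⟨ξ, hξ, ?_⟩
      rw [Set.mem_Ico] at hx ⊢
      have hξΛ : ξ < lam.ord := hC'.1 hξ
      have hsucc : ξ + 1 < lam.ord := succ_lt_ord hunc hξΛ
      have h2 : e ξ < e (ξ + 1) := he.1 ξ (ξ + 1) (lt_add_one' ξ) hsucc
      have h3 : e (ξ + 1) ∈ {δ | δ < lam.ord ∧ 0 < δ ∧ ∀ β < δ, β + f β < δ} := by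
        rcases Set.mem_insert_iff.mp (he.2.1 _ hsucc) with h0 | h
        · rw [h0] at h2
          exact absurd h2 (not_lt_of_ge zero_le)
        · exact h
      exact ⟨hx.1, lt_trans hx.2 (h3.2.2 (e ξ) h2)⟩
    · intro x hx
      rw [Set.mem_iUnion₂] at hx
      obtain ⟨ξ, hξ, hx⟩ := hx
      have hsucc : ξ + 1 < lam.ord := succ_lt_ord hunc (hC'.1 hξ)
      exact lt_trans hx.2 (hie.1 _ hsucc)
  refine ⟨⟨hAB, hBA⟩, ?_, ?_⟩
  -- (A) → (C)
  · intro hA C hC e he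
    have hie := isEnum_incrCont hreg hunc hC he
    obtain ⟨Cs, hCs, hUD⟩ := hAB hA e hie
    intro hall
    exact hUD (hall Cs hCs.1 ⟨Cs, hCs, subset_rfl⟩).2
  -- (C) → (A)
  · intro hCcond
    by_contra hA
    rw [WeaklyReasonable] at hA
    push_neg at hA
    obtain ⟨f, hf1, hf2, hf3, hbad⟩ := hA
    have hE : IsClub lam {δ | δ < lam.ord ∧ 0 < δ ∧ ∀ β < δ, β + f β < δ} :=
      club_closurePoints hreg hunc hf1 hf2
    obtain ⟨e, he⟩ := exists_enum hreg hunc hE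
    have hie := isEnum_incrCont hreg hunc hE he
    refine hCcond _ hE e he ?_
    rintro A hA' ⟨C', hC', hC'A⟩
    have himg := club_image hreg hunc hie hC'
    have hin := hbad _ himg
    refine ⟨hA', hup _ hin _ ?_ ?_⟩
    · intro x hx
      rw [Set.mem_iUnion₂] at hx ⊢
      obtain ⟨δ, ⟨ξ, hξ, rfl⟩, hx⟩ := hx
      refine ⟨ξ, hC'A hξ, ?_⟩
      rw [Set.mem_Ico] at hx ⊢
      have hξΛ : ξ < lam.ord := hC'.1 hξ
      have hsucc : ξ + 1 < lam.ord := succ_lt_ord hunc hξΛ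
      have h2 : e ξ < e (ξ + 1) := he.1 ξ (ξ + 1) (lt_add_one' ξ) hsucc
      have h3 : e (ξ + 1) ∈ {δ | δ < lam.ord ∧ 0 < δ ∧ ∀ β < δ, β + f β < δ} := by
        rcases Set.mem_insert_iff.mp (he.2.1 _ hsucc) with h0 | h
        · rw [h0] at h2
          exact absurd h2 (not_lt_of_ge zero_le)
        · exact h
      exact ⟨hx.1, lt_trans hx.2 (h3.2.2 (e ξ) h2)⟩
    · intro x hx
      rw [Set.mem_iUnion₂] at hx
      obtain ⟨ξ, hξ, hx⟩ := hx
      have hsucc : ξ + 1 < lam.ord := succ_lt_ord hunc (hA' hξ)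
      exact lt_trans hx.2 (hie.1 _ hsucc)


end

end RS889
end

section
/- Let 𝓕 be a system of local filters on λ and p, q ∈ Q*_λ(𝓕). Then p ≤* q if and only if there is ε < λ such that for every (α,Z,F) ∈ q with α > ε and every A ∈ F⁺ there is (α',Z',F') ∈ p with A ∩ Z' ∈ (F')⁺. -/
namespace RS889

noncomputable section

open Cardinal Set

universe u v

lemma isRegular_lift {lam : Cardinal.{0}} (h : lam.IsRegular) :
    (Cardinal.lift.{1} lam).IsRegular := by
  constructor
  · exact Cardinal.aleph0_le_lift.2 h.1
  · rw [← Cardinal.lift_ord, ← Ordinal.lift_cof]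
    exact Cardinal.lift_le.2 h.2

lemma bddW {lam : Cardinal.{0}} (hreg : lam.IsRegular)
    (W : Set Ordinal.{0}) (hW : W ⊆ Set.Iio lam.ord)
    (hc : #W < Cardinal.lift.{1} lam) : ∃ β < lam.ord, ∀ z ∈ W, z < β := by
  have hsmall : Small.{0} W := small_subset hW
  set f : Shrink.{0} W → Ordinal.{0} := fun i => ((equivShrink W).symm i : Ordinal) with hf
  have hcount : #(Shrink.{0} W) < (lam.ord).cof := by
    rw [hreg.cof_eq]
    have := Cardinal.lift_mk_shrink'' (↥W)
    rw [← Cardinal.lift_lt.{_, 1}, this]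
    exact hc
  have hsup : iSup f < lam.ord := Ordinal.iSup_lt_ord hcount fun i => hW ((equivShrink W).symm i).2
  refine ⟨iSup f + 1, (Cardinal.isSuccLimit_ord hreg.aleph0_le).succ_lt hsup, fun z hz => ?_⟩
  have : z ≤ iSup f := by
    have := Ordinal.le_iSup f (equivShrink W ⟨z, hz⟩)
    simpa [hf] using this
  exact this.trans_lt (lt_add_one _)

lemma mk_Iic_lt {lam : Cardinal.{0}} (hreg : lam.IsRegular) {ε : Ordinal.{0}}
    (hε : ε < lam.ord) : #(Set.Iic ε) < Cardinal.lift.{1} lam := by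
  have h1 : ε + 1 < lam.ord := (Cardinal.isSuccLimit_ord hreg.aleph0_le).succ_lt hε
  have : (Set.Iic ε : Set Ordinal.{0}) = Set.Iio (ε + 1) := by
    ext x
    simp [Order.lt_add_one_iff]
  rw [this, Ordinal.mk_Iio_ordinal]
  exact Cardinal.lift_lt.2 (Cardinal.lt_ord.1 h1)

lemma qstar_bdd {lam : Cardinal.{0}} (hreg : lam.IsRegular)
    {F : Set LocalFilter} (hF : IsLFS lam F)
    {r : Set LocalFilter} (hr : r ∈ Qstar lam F) {ε : Ordinal.{0}} (hε : ε < lam.ord) :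
    ∃ β < lam.ord, ∀ s ∈ r, s.a ≤ ε → ∀ z ∈ s.Z, z < β := by
  obtain ⟨hrS, hrcard, hlev⟩ := hr
  set P : Set LocalFilter := {t | t ∈ r ∧ t.a ≤ ε} with hP
  have hPcard : #P < Cardinal.lift.{1} lam := by
    have hsub : P ⊆ ⋃ ξ ∈ Set.Iic ε, {t : LocalFilter | t ∈ r ∧ t.a = ξ} := by
      rintro t ⟨h1, h2⟩
      exact Set.mem_biUnion h2 ⟨h1, rfl⟩
    refine lt_of_le_of_lt (Cardinal.mk_le_mk_of_subset hsub) ?_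
    refine lt_of_le_of_lt (Cardinal.mk_biUnion_le _ _) ?_
    refine Cardinal.mul_lt_of_lt ((isRegular_lift hreg).1) (mk_Iic_lt hreg hε) ?_
    exact Cardinal.iSup_lt_of_isRegular (isRegular_lift hreg) (mk_Iic_lt hreg hε)
      (fun ξ => hlev ξ)
  set W : Set Ordinal.{0} := ⋃ t ∈ P, t.Z with hW
  have hWsub : W ⊆ Set.Iio lam.ord := by
    rintro z hz
    obtain ⟨t, ht, hzt⟩ := Set.mem_iUnion₂.1 hz
    exact (hF.1 t (hrS ht.1)).1 hzt
  have hWcard : #W < Cardinal.lift.{1} lam := by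
    refine lt_of_le_of_lt (Cardinal.mk_biUnion_le _ _) ?_
    refine Cardinal.mul_lt_of_lt ((isRegular_lift hreg).1) hPcard ?_
    exact Cardinal.iSup_lt_of_isRegular (isRegular_lift hreg) hPcard
      (fun t => ((hF.1 t.1 (hrS t.2.1)).2.1))
  obtain ⟨β, hβ, hβW⟩ := bddW hreg W hWsub hWcard
  exact ⟨β, hβ, fun s hs hsa z hz => hβW z (Set.mem_biUnion ⟨hs, hsa⟩ hz)⟩

/-- Proposition 1.5(1). -/
theorem stmt1 (lam : Cardinal.{0}) (hreg : lam.IsRegular) (hunc : ℵ₀ < lam)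
    (F : Set LocalFilter) (hF : IsLFS lam F)
    (p q : Set LocalFilter) (hp : p ∈ Qstar lam F) (hq : q ∈ Qstar lam F) :
    fil lam p ⊆ fil lam q ↔
      ∃ ε < lam.ord, ∀ t ∈ q, ε < t.a →
        ∀ A ∈ posOf t.F t.Z, ∃ s ∈ p, (A ∩ s.Z) ∈ posOf s.F s.Z := by
  have hlim := Cardinal.isSuccLimit_ord hreg.aleph0_le
  constructor
  · intro hsub
    by_contra hno
    push_neg at hno
    -- choice of counterexamples
    have key : ∀ ε : Ordinal.{0}, ∃ (t : LocalFilter) (B : Set Ordinal.{0}),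
        ε < lam.ord → t ∈ q ∧ ε < t.a ∧ B ∈ posOf t.F t.Z ∧
          ∀ s ∈ p, B ∩ s.Z ∉ posOf s.F s.Z := by
      intro ε
      by_cases h : ε < lam.ord
      · obtain ⟨t, ht, hta, B, hB, hbad⟩ := hno ε h
        exact ⟨t, B, fun _ => ⟨ht, hta, hB, hbad⟩⟩
      · exact ⟨⟨0, ∅, ∅⟩, ∅, fun h' => absurd h' h⟩
    choose T Abad hTA using key
    -- the bounding functions
    have keyB : ∀ ε : Ordinal.{0}, ∃ β : Ordinal.{0}, ε < lam.ord →
        β < lam.ord ∧ ε < β ∧ (∀ z ∈ (T ε).Z, z < β) ∧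
          (∀ s ∈ p, s.a ≤ ε → ∀ z ∈ s.Z, z < β) := by
      intro ε
      by_cases h : ε < lam.ord
      · obtain ⟨ht, hta, hB, hbad⟩ := hTA ε h
        obtain ⟨hZ1, hZ2, hZ3, hZ4⟩ := hF.1 _ (hq.1 ht)
        obtain ⟨β₁, hβ₁, hβ₁Z⟩ := bddW hreg (T ε).Z hZ1 hZ2
        obtain ⟨β₂, hβ₂, hβ₂Z⟩ := qstar_bdd hreg hF hp h
        refine ⟨max (max β₁ β₂) (ε + 1), fun _ =>
          ⟨max_lt (max_lt hβ₁ hβ₂) (hlim.succ_lt h),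
            (lt_add_one ε).trans_le (le_max_right _ _), ?_, ?_⟩⟩
        · exact fun z hz => (hβ₁Z z hz).trans_le ((le_max_left _ _).trans (le_max_left _ _))
        · exact fun s hs hsa z hz =>
            (hβ₂Z s hs hsa z hz).trans_le ((le_max_right β₁ _).trans (le_max_left _ _))
      · exact ⟨0, fun h' => absurd h' h⟩
    choose B0 hB0 using keyB
    -- the monotone majorant
    set M : Ordinal.{0} → Ordinal.{0} := fun ε => sSup (B0 '' Set.Iic ε) with hMdef
    have hMbdd : ∀ ε : Ordinal.{0}, BddAbove (B0 '' Set.Iic ε) := fun ε =>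
      Ordinal.bddAbove_of_small
    have hMmono : Monotone M := fun a b hab =>
      csSup_le_csSup (hMbdd b) (Set.Nonempty.image _ Set.nonempty_Iic)
        (Set.image_mono (Set.Iic_subset_Iic.2 hab))
    have hMge : ∀ ε, B0 ε ≤ M ε := fun ε =>
      le_csSup (hMbdd ε) (Set.mem_image_of_mem _ Set.self_mem_Iic)
    have hMself : ∀ ε < lam.ord, ε < M ε := fun ε hε =>
      ((hB0 ε hε).2.1).trans_le (hMge ε)
    have hMlt : ∀ ε < lam.ord, M ε < lam.ord := by
      intro ε hε
      have hsub : B0 '' Set.Iic ε ⊆ Set.Iio lam.ord := by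
        rintro _ ⟨ξ, hξ, rfl⟩
        exact (hB0 ξ (lt_of_le_of_lt hξ hε)).1
      obtain ⟨β, hβ, hβW⟩ := bddW hreg _ hsub
        (lt_of_le_of_lt Cardinal.mk_image_le (mk_Iic_lt hreg hε))
      exact lt_of_le_of_lt
        (csSup_le ((Set.nonempty_Iic).image _) fun b hb => (hβW b hb).le) hβ
    -- closure points of M
    set D : Set Ordinal.{0} := {δ | δ < lam.ord ∧ ∀ ε < δ, M ε < δ} with hDdef
    have hDunb : ∀ a < lam.ord, ∃ δ ∈ D, a < δ := by
      intro a ha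
      have hnfp : Ordinal.nfp M (a + 1) < lam.ord :=
        Cardinal.nfp_lt_ord_of_isRegular hreg hunc.ne' hMlt (hlim.succ_lt ha)
      refine ⟨Ordinal.nfp M (a + 1), ⟨hnfp, ?_⟩,
        (lt_add_one a).trans_le (Ordinal.le_nfp M (a + 1))⟩
      intro ε hε
      obtain ⟨n, hn⟩ := Ordinal.lt_nfp_iff.1 hε
      have hit : ∀ m : ℕ, M^[m] (a + 1) < lam.ord := fun m =>
        (Ordinal.iterate_le_nfp M (a + 1) m).trans_lt hnfp
      have h1 : M ε ≤ M^[n + 1] (a + 1) := by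
        rw [Function.iterate_succ_apply']
        exact hMmono hn.le
      have h2 : M^[n + 1] (a + 1) < M^[n + 2] (a + 1) := by
        rw [Function.iterate_succ_apply' M (n + 1)]
        exact hMself _ (hit (n + 1))
      exact (h1.trans_lt h2).trans_le (Ordinal.iterate_le_nfp M (a + 1) (n + 2))
    -- the separating set
    set A : Set Ordinal.{0} := Set.Iio lam.ord \ ⋃ δ ∈ D, Abad δ with hAdef
    have hApfil : A ∈ fil lam p := by
      refine ⟨Set.diff_subset, 0, hlim.pos, fun s hs _ => ?_⟩
      obtain ⟨hZs, hcards, hleasts, hfilts⟩ := hF.1 s (hp.1 hs)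
      obtain ⟨hsubZs, hZsmem, hups, hinters, hnes⟩ := hfilts
      set J : Set Ordinal.{0} := {δ | δ ∈ D ∧ (Abad δ ∩ s.Z).Nonempty} with hJdef
      have hthree : ∀ δ₁ ∈ J, ∀ δ₂ ∈ J, ∀ δ₃ ∈ J, δ₁ < δ₂ → δ₂ < δ₃ → False := by
        rintro δ₁ ⟨hδ₁D, x₁, hx₁⟩ δ₂ ⟨hδ₂D, -⟩ δ₃ ⟨hδ₃D, x₃, hx₃⟩ h12 h23
        obtain ⟨ht1, hta1, hB1, hbad1⟩ := hTA δ₁ hδ₁D.1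
        obtain ⟨ht3, hta3, hB3, hbad3⟩ := hTA δ₃ hδ₃D.1
        have hx₁M : x₁ < M δ₁ :=
          ((hB0 δ₁ hδ₁D.1).2.2.1 x₁ (hB1.1 hx₁.1)).trans_le (hMge δ₁)
        have hsaδ₂ : s.a < δ₂ :=
          (hleasts.2 hx₁.2).trans_lt (hx₁M.trans (hδ₂D.2 δ₁ h12))
        have hx₃lt : x₃ < δ₃ := by
          have h1 : x₃ < B0 s.a :=
            (hB0 s.a (hsaδ₂.trans hδ₂D.1)).2.2.2 s hs le_rfl x₃ hx₃.2
          have h2 : M s.a ≤ M δ₂ := hMmono hsaδ₂.le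
          exact ((h1.trans_le ((hMge s.a).trans h2)).trans (hδ₃D.2 δ₂ h23))
        have hx₃gt : δ₃ < x₃ :=
          hta3.trans_le ((hF.1 _ (hq.1 ht3)).2.2.1.2 (hB3.1 hx₃.1))
        exact absurd hx₃lt hx₃gt.asymm
      have getC : ∀ δ ∈ J, ∃ C ∈ s.F, Abad δ ∩ s.Z ∩ C = ∅ := by
        rintro δ ⟨hδD, hne⟩
        obtain ⟨ht, hta, hB, hbad⟩ := hTA δ hδD.1
        by_contra hC
        push_neg at hC
        exact hbad s hs ⟨Set.inter_subset_right, fun C hCF => hC C hCF⟩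
      by_cases hJne : J.Nonempty
      · set δa := sInf J with hδadef
        have haJ : δa ∈ J := csInf_mem hJne
        obtain ⟨Ca, hCa, hCae⟩ := getC δa haJ
        by_cases hJ2 : (J \ {δa}).Nonempty
        · set δb := sInf (J \ {δa}) with hδbdef
          have hbJ : δb ∈ J \ {δa} := csInf_mem hJ2
          obtain ⟨Cb, hCb, hCbe⟩ := getC δb hbJ.1
          have hab : δa < δb :=
            lt_of_le_of_ne (csInf_le' hbJ.1) (fun h => hbJ.2 h.symm)
          have hJsub : ∀ δ ∈ J, δ = δa ∨ δ = δb := by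
            intro δ hδ
            by_contra hcon
            push_neg at hcon
            have h1 : δb < δ :=
              lt_of_le_of_ne (csInf_le' ⟨hδ, hcon.1⟩) (Ne.symm hcon.2)
            exact hthree δa haJ δb hbJ.1 δ hδ hab h1
          have hCmem : Ca ∩ Cb ∈ s.F := hinters Ca hCa Cb hCb
          have hCsub : Ca ∩ Cb ⊆ A ∩ s.Z := by
            intro x hx
            have hxZ : x ∈ s.Z := hsubZs Ca hCa hx.1
            refine ⟨⟨hZs hxZ, fun hxU => ?_⟩, hxZ⟩
            obtain ⟨δ, hδD, hxδ⟩ := Set.mem_iUnion₂.1 hxU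
            have hδJ : δ ∈ J := ⟨hδD, ⟨x, hxδ, hxZ⟩⟩
            rcases hJsub δ hδJ with h | h
            · have hmem : x ∈ Abad δ ∩ s.Z ∩ Ca := ⟨⟨hxδ, hxZ⟩, hx.1⟩
              rw [h, hCae] at hmem
              exact hmem
            · have hmem : x ∈ Abad δ ∩ s.Z ∩ Cb := ⟨⟨hxδ, hxZ⟩, hx.2⟩
              rw [h, hCbe] at hmem
              exact hmem
          exact hups _ hCmem (A ∩ s.Z) hCsub Set.inter_subset_right
        · have hJsub : ∀ δ ∈ J, δ = δa := by
            intro δ hδ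
            by_contra h
            exact hJ2 ⟨δ, hδ, h⟩
          have hCsub : Ca ⊆ A ∩ s.Z := by
            intro x hx
            have hxZ : x ∈ s.Z := hsubZs Ca hCa hx
            refine ⟨⟨hZs hxZ, fun hxU => ?_⟩, hxZ⟩
            obtain ⟨δ, hδD, hxδ⟩ := Set.mem_iUnion₂.1 hxU
            have hδJ : δ ∈ J := ⟨hδD, ⟨x, hxδ, hxZ⟩⟩
            have hmem : x ∈ Abad δ ∩ s.Z ∩ Ca := ⟨⟨hxδ, hxZ⟩, hx⟩
            rw [hJsub δ hδJ, hCae] at hmem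
            exact hmem
          exact hups _ hCa (A ∩ s.Z) hCsub Set.inter_subset_right
      · have hsubA : s.Z ⊆ A := by
          intro z hz
          refine ⟨hZs hz, fun hzU => ?_⟩
          obtain ⟨δ, hδD, hzδ⟩ := Set.mem_iUnion₂.1 hzU
          exact hJne ⟨δ, hδD, ⟨z, hzδ, hz⟩⟩
        rw [Set.inter_eq_right.2 hsubA]
        exact hZsmem
    -- contradiction with A ∈ fil lam q
    obtain ⟨-, ε, hε, hfq⟩ := hsub hApfil
    obtain ⟨δ, hδD, hδε⟩ := hDunb ε hε
    obtain ⟨ht, hta, hB, hbad⟩ := hTA δ hδD.1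
    have hAZ : A ∩ (T δ).Z ∈ (T δ).F := hfq (T δ) ht (hδε.le.trans hta.le)
    obtain ⟨x, hx⟩ := hB.2 _ hAZ
    exact hx.2.1.2 (Set.mem_biUnion hδD hx.1)
  · rintro ⟨ε₀, hε₀, hmain⟩ A ⟨hA, ε₁, hε₁, h1⟩
    obtain ⟨β, hβ, hβZ⟩ := qstar_bdd hreg hF hp hε₁
    refine ⟨hA, max (max ε₀ ε₁) β + 1, hlim.succ_lt (max_lt (max_lt hε₀ hε₁) hβ), ?_⟩
    intro t ht hta
    by_contra hAZ
    obtain ⟨hZt, hcardt, hleastt, hfiltt⟩ := hF.1 t (hq.1 ht)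
    obtain ⟨hsubZt, hZtmem, hupt, hintert, hnet⟩ := hfiltt
    have hBpos : t.Z \ A ∈ posOf t.F t.Z := by
      refine ⟨Set.diff_subset, fun C hC => ?_⟩
      rw [Set.nonempty_iff_ne_empty]
      intro hemp
      have hCA : C ⊆ A := by
        intro x hx
        by_contra hxA
        have : x ∈ (t.Z \ A) ∩ C := ⟨⟨hsubZt C hC hx, hxA⟩, hx⟩
        rw [hemp] at this
        exact this
      exact hAZ (hupt C hC (A ∩ t.Z) (fun x hx => ⟨hCA hx, hsubZt C hC hx⟩)
        Set.inter_subset_right)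
    have hε₀t : ε₀ < t.a :=
      (((le_max_left ε₀ ε₁).trans (le_max_left _ β)).trans_lt
        ((lt_add_one _).trans_le hta))
    obtain ⟨s, hs, hpos⟩ := hmain t ht hε₀t _ hBpos
    obtain ⟨hZs, hcards, hleasts, hfilts⟩ := hF.1 s (hp.1 hs)
    rcases lt_or_ge s.a ε₁ with hcase | hcase
    · obtain ⟨x, hx⟩ := hpos.2 s.Z hfilts.2.1
      have hxβ : x < β := hβZ s hs hcase.le x hx.2
      have hβx : β ≤ x :=
        ((le_max_right (max ε₀ ε₁) β).trans ((lt_add_one _).le.trans hta)).trans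
          (hleastt.2 hx.1.1.1)
      exact absurd hxβ hβx.not_gt
    · obtain ⟨x, hx⟩ := hpos.2 _ (h1 s hs hcase)
      exact hx.1.1.2 hx.2.1

end

end RS889
end

section
/- Assume 𝓕 is a system of local filters on λ and Ē = ⟨E_κ : κ an infinite cardinal < λ⟩ where each E_κ is a uniform filter on κ. Then the Ē-closure of 𝓕 is a system of local filters on λ extending 𝓕 and satisfying condition (⊕)^sum: whenever κ < λ is an infinite cardinal and ⟨(α_ξ,Z_ξ,F_ξ) : ξ < κ⟩ is a sequence from the Ē-closure with Z_ξ ⊆ α_ζ for all ξ < ζ < κ, then for some uniform filter F on κ the triple (α₀, ∪_{ξ<κ} Z_ξ, ⊕^F_{ξ<κ} F_ξ) belongs to the Ē-closure. -/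
namespace RS889

noncomputable section

open Cardinal Set

universe u v

/-- Proposition 1.9: the `Ē`-closure of a system of local filters is a system of local
filters extending it and satisfying `(⊕)^sum`. -/
theorem stmt5 (lam : Cardinal.{0}) (hreg : lam.IsRegular) (hunc : ℵ₀ < lam)
    (F : Set LocalFilter) (hF : IsLFS lam F)
    (E : Cardinal.{0} → Set (Set Ordinal.{0}))
    (hE : ∀ κ : Cardinal.{0}, ℵ₀ ≤ κ → κ < lam →
      IsFilterOn (E κ) (Set.Iio κ.ord) ∧ ∀ A ∈ E κ, #A = Cardinal.lift.{1} κ) :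
    IsLFS lam {t | EClos lam E F t} ∧ F ⊆ {t | EClos lam E F t} ∧
      SumCond lam {t | EClos lam E F t} := by
  have hreg' : (Cardinal.lift.{1} lam).IsRegular := by
    constructor
    · calc (ℵ₀ : Cardinal.{1}) = Cardinal.lift.{1} ℵ₀ := (Cardinal.lift_aleph0.{1,0}).symm
        _ ≤ _ := Cardinal.lift_le.2 hreg.1
    · rw [← Cardinal.lift_ord, ← Ordinal.lift_cof]
      exact Cardinal.lift_le.2 hreg.2
  have main : ∀ t, EClos lam E F t → t.Z ⊆ Set.Iio lam.ord ∧
      #t.Z < Cardinal.lift.{1} lam ∧ IsLeast t.Z t.a ∧ IsFilterOn t.F t.Z := by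
    intro t ht
    induction ht with
    | base t htF => exact hF.1 t htF
    | sum κ hκ0 hκlam t ht hdisj IH =>
      have hord0 : (0 : Ordinal.{0}) < κ.ord := by
        calc (0 : Ordinal.{0}) < Ordinal.omega0 := Ordinal.omega0_pos
        _ = Cardinal.ord ℵ₀ := (Cardinal.ord_aleph0).symm
        _ ≤ κ.ord := Cardinal.ord_le_ord.2 hκ0
      set U : Set Ordinal.{0} := ⋃ ξ ∈ Set.Iio κ.ord, (t ξ).Z with hU
      have hZU : ∀ ξ, ξ < κ.ord → (t ξ).Z ⊆ U := by
        intro ξ hξ x hx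
        exact Set.mem_biUnion hξ hx
      have hsub : U ⊆ Set.Iio lam.ord := by
        intro x hx
        rcases Set.mem_iUnion₂.1 hx with ⟨ξ, hξ, hxξ⟩
        exact (IH ξ hξ).1 hxξ
      have hκlt : #(Set.Iio κ.ord) < Cardinal.lift.{1} lam := by
        rw [Ordinal.mk_Iio_ordinal, Cardinal.card_ord]
        exact Cardinal.lift_lt.2 hκlam
      have hcard : #U < Cardinal.lift.{1} lam := by
        refine lt_of_le_of_lt (Cardinal.mk_biUnion_le (fun ξ => (t ξ).Z) (Set.Iio κ.ord)) ?_
        refine Cardinal.mul_lt_of_lt hreg'.1 hκlt ?_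
        refine Cardinal.iSup_lt_of_isRegular hreg' hκlt ?_
        intro i
        exact (IH i.1 i.2).2.1
      have hleast : IsLeast U (t 0).a := by
        constructor
        · exact hZU 0 hord0 (IH 0 hord0).2.2.1.1
        · intro x hx
          rcases Set.mem_iUnion₂.1 hx with ⟨ξ, hξ, hxξ⟩
          rcases eq_or_ne ξ 0 with rfl | hne
          · exact (IH 0 hord0).2.2.1.2 hxξ
          · have h0ξ : (0 : Ordinal.{0}) < ξ := pos_iff_ne_zero.2 hne
            have h1 : (t 0).a < (t ξ).a :=
              hdisj 0 ξ h0ξ hξ (IH 0 hord0).2.2.1.1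
            have h2 : (t ξ).a ≤ x := (IH ξ hξ).2.2.1.2 hxξ
            exact le_of_lt (lt_of_lt_of_le h1 h2)
      obtain ⟨hEfil, -⟩ := hE κ hκ0 hκlam
      obtain ⟨hEsub, hEtop, hEup, hEint, hEne⟩ := hEfil
      refine ⟨hsub, hcard, hleast, ?_, ?_, ?_, ?_, ?_⟩
      · intro A hA; exact hA.1
      · refine ⟨le_refl U, ?_⟩
        have heq : {ξ | ξ ∈ Set.Iio κ.ord ∧ (t ξ).Z ∩ U ∈ (t ξ).F} = Set.Iio κ.ord := by
          ext ξ
          constructor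
          · intro h; exact h.1
          · intro hξ
            refine ⟨hξ, ?_⟩
            have heq2 : (t ξ).Z ∩ U = (t ξ).Z := Set.inter_eq_left.2 (hZU ξ hξ)
            rw [heq2]
            exact (IH ξ hξ).2.2.2.2.1
        rw [heq]
        exact hEtop
      · intro A hA B hAB hBU
        refine ⟨hBU, ?_⟩
        refine hEup _ hA.2 _ ?_ ?_
        · intro ξ hξ
          refine ⟨hξ.1, ?_⟩
          obtain ⟨-, -, hup, -, -⟩ := (IH ξ hξ.1).2.2.2
          exact hup _ hξ.2 _ (Set.inter_subset_inter_right _ hAB)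
            Set.inter_subset_left
        · intro ξ hξ; exact hξ.1
      · intro A hA B hB
        refine ⟨subset_trans Set.inter_subset_left hA.1, ?_⟩
        refine hEup _ (hEint _ hA.2 _ hB.2) _ ?_ ?_
        · intro ξ hξ
          refine ⟨hξ.1.1, ?_⟩
          obtain ⟨-, -, hup, hint, -⟩ := (IH ξ hξ.1.1).2.2.2
          have hmem := hint _ hξ.1.2 _ hξ.2.2
          refine hup _ hmem _ ?_ Set.inter_subset_left
          intro x hx
          exact ⟨hx.1.1, hx.1.2, hx.2.2⟩
        · intro ξ hξ; exact hξ.1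
      · intro h
        have heq : {ξ | ξ ∈ Set.Iio κ.ord ∧ (t ξ).Z ∩ (∅ : Set Ordinal.{0}) ∈ (t ξ).F}
            = ∅ := by
          ext ξ
          simp only [Set.mem_setOf_eq, Set.inter_empty, Set.mem_empty_iff_false, iff_false,
            not_and]
          intro hξ
          exact (IH ξ hξ).2.2.2.2.2.2.2
        have h2 := h.2
        rw [heq] at h2
        exact hEne h2
  refine ⟨⟨fun t ht => main t ht, ?_⟩, fun t ht => EClos.base t ht, ?_⟩
  · intro β hβ
    obtain ⟨t, htF, hβt⟩ := hF.2 β hβ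
    exact ⟨t, EClos.base t htF, hβt⟩
  · intro κ hκ0 hκlam t ht hdisj
    exact ⟨E κ, (hE κ hκ0 hκlam).1, (hE κ hκ0 hκlam).2,
      EClos.sum κ hκ0 hκlam t ht hdisj⟩

end

end RS889
end

section
/- If λ is a measurable cardinal, then there exist a system 𝓕 of local filters on λ and a family H ⊆ Q⁰_λ(𝓕) which is (<λ⁺)-directed with respect to ≤* (i.e., every subfamily of H of cardinality ≤ λ has a ≤*-upper bound in H) such that fil(H) is an ultrafilter on λ containing all club subsets of λ (and hence fil(H) is not weakly reasonable). -/
namespace RS889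

noncomputable section

open Cardinal Set

universe u v

/-! ### Auxiliary material for `stmt6` -/

section Stmt6Aux

/-- A bundled "normal ultrafilter" on `Iio lam.ord`. -/
structure Nice (lam : Cardinal.{0}) (W : Set (Set Ordinal.{0})) : Prop where
  subs : ∀ A ∈ W, A ⊆ Set.Iio lam.ord
  top : Set.Iio lam.ord ∈ W
  mono : ∀ A ∈ W, ∀ B, A ⊆ B → B ⊆ Set.Iio lam.ord → B ∈ W
  inter : ∀ A ∈ W, ∀ B ∈ W, A ∩ B ∈ W
  emp : ∅ ∉ W
  ultra : ∀ A ⊆ Set.Iio lam.ord, A ∈ W ∨ Set.Iio lam.ord \ A ∈ W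
  nonprin : ∀ x : Ordinal.{0}, ({x} : Set Ordinal.{0}) ∉ W
  complete : ∀ S ⊆ W, #S < Cardinal.lift.{1} lam → (Set.Iio lam.ord ∩ ⋂₀ S) ∈ W
  normal : ∀ A : Ordinal.{0} → Set Ordinal.{0}, (∀ α, A α ∈ W) →
      {ξ | ξ < lam.ord ∧ ∀ α < ξ, ξ ∈ A α} ∈ W

variable {lam : Cardinal.{0}} {W : Set (Set Ordinal.{0})}

lemma Nice.ne (hW : Nice lam W) {A : Set Ordinal.{0}} (hA : A ∈ W) : A.Nonempty :=
  Set.nonempty_iff_ne_empty.mpr fun h => hW.emp (h ▸ hA)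

lemma Nice.cobdd (hW : Nice lam W) (hunc : ℵ₀ < lam) {ε : Ordinal.{0}} (hε : ε < lam.ord) :
    {ξ | ξ < lam.ord ∧ ε < ξ} ∈ W := by
  classical
  set T := (fun x => Set.Iio lam.ord \ {x}) '' (Set.Iic ε) with hT
  have hTW : T ⊆ W := by
    rintro _ ⟨x, hx, rfl⟩
    have hx' : ({x} : Set Ordinal.{0}) ⊆ Set.Iio lam.ord := by
      simpa using lt_of_le_of_lt (Set.mem_Iic.mp hx) hε
    exact (hW.ultra {x} hx').resolve_left (hW.nonprin x)
  have hsucc : ε + 1 < lam.ord := by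
    rw [Ordinal.add_one_eq_succ]
    exact (Cardinal.isSuccLimit_ord hunc.le).succ_lt hε
  have hTc : #T < Cardinal.lift.{1} lam := by
    have h1 : Set.Iic ε = Set.Iio (ε + 1) := by
      ext x; simp [Order.lt_add_one_iff]
    calc #T ≤ #(Set.Iic ε) := Cardinal.mk_image_le
      _ = Cardinal.lift.{1} (ε + 1).card := by rw [h1, Ordinal.mk_Iio_ordinal]
      _ < Cardinal.lift.{1} lam := Cardinal.lift_lt.mpr (Cardinal.lt_ord.mp hsucc)
  refine hW.mono _ (hW.complete T hTW hTc) _ ?_ (fun ξ h => h.1)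
  rintro ξ ⟨hξ, hξT⟩
  refine ⟨hξ, ?_⟩
  by_contra hcon
  push_neg at hcon
  exact (hξT _ ⟨ξ, Set.mem_Iic.mpr hcon, rfl⟩).2 rfl

lemma Nice.uniform (hW : Nice lam W) {A : Set Ordinal.{0}} (hA : A ∈ W) :
    #A = Cardinal.lift.{1} lam := by
  refine le_antisymm ?_ ?_
  · calc #A ≤ #(Set.Iio lam.ord) := Cardinal.mk_le_mk_of_subset (hW.subs A hA)
      _ = Cardinal.lift.{1} lam.ord.card := Ordinal.mk_Iio_ordinal _
      _ = Cardinal.lift.{1} lam := by rw [Cardinal.card_ord]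
  · by_contra hcon
    push_neg at hcon
    set T := (fun x => Set.Iio lam.ord \ {x}) '' A with hT
    have hTW : T ⊆ W := by
      rintro _ ⟨x, hxA, rfl⟩
      have hx : ({x} : Set Ordinal.{0}) ⊆ Set.Iio lam.ord := by
        simpa using hW.subs A hA hxA
      exact (hW.ultra {x} hx).resolve_left (hW.nonprin x)
    have hTc : #T < Cardinal.lift.{1} lam := lt_of_le_of_lt Cardinal.mk_image_le hcon
    obtain ⟨ξ, ⟨-, hξT⟩, hξA⟩ := hW.ne (hW.inter _ (hW.complete T hTW hTc) _ hA)
    exact (hξT _ ⟨ξ, hξA, rfl⟩).2 rfl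

lemma Nice.regress (hW : Nice lam W) {B : Set Ordinal.{0}} (hB : B ∈ W)
    (g : Ordinal.{0} → Ordinal.{0}) (hg : ∀ ξ ∈ B, g ξ < ξ) :
    ∃ γ, {ξ | ξ < lam.ord ∧ g ξ = γ} ∈ W := by
  by_contra hcon
  push_neg at hcon
  have hA : ∀ γ, (Set.Iio lam.ord \ {ξ | ξ < lam.ord ∧ g ξ = γ}) ∈ W := fun γ =>
    (hW.ultra {ξ | ξ < lam.ord ∧ g ξ = γ} (fun ξ h => h.1)).resolve_left (hcon γ)
  obtain ⟨ξ, hξd, hξB⟩ := hW.ne (hW.inter _ (hW.normal _ hA) _ hB)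
  exact (hξd.2 (g ξ) (hg ξ hξB)).2 ⟨hξd.1, rfl⟩

lemma Nice.club (hW : Nice lam W) (hunc : ℵ₀ < lam) {C : Set Ordinal.{0}}
    (hC : IsClub lam C) : C ∈ W := by
  obtain ⟨hC1, hC2, hC3⟩ := hC
  by_contra hCW
  have hzero : (0 : Ordinal.{0}) < lam.ord := Cardinal.lt_ord.mpr (by simpa using hunc.trans_le' (by simp))
  have hB0 : Set.Iio lam.ord \ C ∈ W := (hW.ultra C hC1).resolve_left hCW
  obtain ⟨c0, hc0C, -⟩ := hC2 0 hzero
  set B := (Set.Iio lam.ord \ C) ∩ {ξ | ξ < lam.ord ∧ c0 < ξ} with hB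
  have hBW : B ∈ W := hW.inter _ hB0 _ (hW.cobdd hunc (hC1 hc0C))
  set g : Ordinal.{0} → Ordinal.{0} := fun ξ => sSup (C ∩ Set.Iio ξ) with hg
  have hgB : ∀ ξ ∈ B, g ξ < ξ := by
    rintro ξ ⟨⟨hxl, hxC⟩, -, hc0x⟩
    have hne : (C ∩ Set.Iio ξ).Nonempty := ⟨c0, hc0C, hc0x⟩
    rcases lt_or_eq_of_le (csSup_le hne (fun x hx => (Set.mem_Iio.mp hx.2).le)) with h | h
    · exact h
    · exfalso
      apply hxC
      refine hC3 ξ hxl (fun h0 => (zero_le : (0 : Ordinal.{0}) ≤ c0).not_gt (h0 ▸ hc0x)) ?_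
      intro β hβ
      obtain ⟨x, hx, hβx⟩ := exists_lt_of_lt_csSup hne (h ▸ hβ)
      exact ⟨x, hx.1, hβx, hx.2⟩
  obtain ⟨γ, hγW⟩ := hW.regress hBW g hgB
  obtain ⟨ξ0, hξ0⟩ := hW.ne (hW.inter _ hγW _ hBW)
  have hgl : γ < lam.ord := by
    have h1 := hgB ξ0 hξ0.2
    rw [hξ0.1.2] at h1
    exact h1.trans hξ0.1.1
  obtain ⟨c, hcC, hγc⟩ := hC2 γ hgl
  obtain ⟨ξ, ⟨hξγ, hξB⟩, hξc⟩ :=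
    hW.ne (hW.inter _ (hW.inter _ hγW _ hBW) _ (hW.cobdd hunc (hC1 hcC)))
  have hbdd : BddAbove (C ∩ Set.Iio ξ) := ⟨ξ, fun x hx => (Set.mem_Iio.mp hx.2).le⟩
  have hle : c ≤ g ξ := le_csSup hbdd ⟨hcC, hξc.2⟩
  rw [hξγ.2] at hle
  exact absurd hγc (not_lt.mpr hle)

/-- From a `lam`-complete nonprincipal ultrafilter we get a normal one. -/
lemma exists_nice (lam : Cardinal.{0}) (hreg : lam.IsRegular) (hunc : ℵ₀ < lam)
    (hmeas : ∃ U : Set (Set Ordinal.{0}), IsUltraOn U (Set.Iio lam.ord) ∧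
      (∀ x : Ordinal.{0}, ({x} : Set Ordinal.{0}) ∉ U) ∧
      ∀ S : Set (Set Ordinal.{0}), S ⊆ U → #S < Cardinal.lift.{1} lam →
        (Set.Iio lam.ord ∩ ⋂₀ S) ∈ U) :
    ∃ W, Nice lam W := by
  classical
  obtain ⟨U, ⟨⟨hUsub, hUtop, hUmono, hUinter, hUemp⟩, hUult⟩, hUnp, hUcomp⟩ := hmeas
  have hUne : ∀ A ∈ U, A.Nonempty := fun A hA =>
    Set.nonempty_iff_ne_empty.mpr fun h => hUemp (h ▸ hA)
  have hsmallU : ∀ γ : Ordinal.{0}, ∀ s ⊆ ({γ} : Set Ordinal.{0}), s ∉ U := by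
    intro γ s hs hsU
    rcases (Set.subset_singleton_iff_eq.mp hs) with rfl | rfl
    · exact hUemp hsU
    · exact hUnp γ hsU
  set NC : (Ordinal.{0} → Ordinal.{0}) → Prop :=
    fun f => (∀ ξ < lam.ord, f ξ < lam.ord) ∧ ∀ γ, {ξ | ξ < lam.ord ∧ f ξ = γ} ∉ U with hNCdef
  have hNCid : NC id := by
    refine ⟨fun ξ h => h, fun γ => hsmallU γ _ ?_⟩
    rintro ξ ⟨-, rfl⟩
    rfl
  have hmin : ∃ f, NC f ∧ ∀ g, NC g → {ξ | ξ < lam.ord ∧ g ξ < f ξ} ∉ U := by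
    by_contra hcon
    push_neg at hcon
    choose! g hg1 hg2 using hcon
    set F : ℕ → (Ordinal.{0} → Ordinal.{0}) := fun n => g^[n] id with hF
    have hFs : ∀ n, F (n + 1) = g (F n) := fun n => Function.iterate_succ_apply' g n id
    have hFNC : ∀ n, NC (F n) := by
      intro n
      induction n with
      | zero => exact hNCid
      | succ n ih => rw [hFs]; exact hg1 _ ih
    have hFU : ∀ n, {ξ | ξ < lam.ord ∧ F (n + 1) ξ < F n ξ} ∈ U := by
      intro n
      rw [hFs]
      exact hg2 _ (hFNC n)
    have hcap : (Set.Iio lam.ord ∩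
        ⋂₀ (Set.range fun n => {ξ | ξ < lam.ord ∧ F (n + 1) ξ < F n ξ})) ∈ U := by
      apply hUcomp
      · rintro A ⟨n, rfl⟩
        exact hFU n
      · have hb1 : #(Set.range fun n : ℕ => {ξ | ξ < lam.ord ∧ F (n + 1) ξ < F n ξ}) ≤ ℵ₀ :=
          (Set.countable_range _).le_aleph0
        have hb2 : (ℵ₀ : Cardinal.{1}) < Cardinal.lift.{1} lam := by
          simpa using Cardinal.lift_lt.{0, 1}.mpr hunc
        exact lt_of_le_of_lt hb1 hb2
    obtain ⟨ξ, -, hξ⟩ := hUne _ hcap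
    rw [Set.mem_sInter] at hξ
    have hdesc : ∀ n, F (n + 1) ξ < F n ξ := fun n => (hξ _ ⟨n, rfl⟩).2
    have hrne : (Set.range fun n : ℕ => F n ξ).Nonempty := ⟨F 0 ξ, 0, rfl⟩
    obtain ⟨n, hn⟩ := Ordinal.lt_wf.min_mem _ hrne
    exact Ordinal.lt_wf.not_lt_min (Set.range fun n : ℕ => F n ξ) (⟨n + 1, rfl⟩ :
      F (n + 1) ξ ∈ Set.range fun n : ℕ => F n ξ) (lt_of_lt_of_eq (hdesc n) hn)
  obtain ⟨f0, ⟨hf0b, hf0nc⟩, hf0min⟩ := hmin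
  set pre : Set Ordinal.{0} → Set Ordinal.{0} :=
    fun A => {ξ | ξ < lam.ord ∧ f0 ξ ∈ A} with hpre
  have hpresub : ∀ A, pre A ⊆ Set.Iio lam.ord := fun A ξ h => h.1
  set W : Set (Set Ordinal.{0}) := {A | A ⊆ Set.Iio lam.ord ∧ pre A ∈ U} with hWdef
  have hWsubs : ∀ A ∈ W, A ⊆ Set.Iio lam.ord := fun A hA => hA.1
  have hWtop : Set.Iio lam.ord ∈ W := by
    refine ⟨Set.Subset.rfl, ?_⟩
    have h1 : pre (Set.Iio lam.ord) = Set.Iio lam.ord :=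
      Set.ext fun ξ => ⟨fun h => h.1, fun h => ⟨h, hf0b ξ h⟩⟩
    rw [h1]
    exact hUtop
  have hWmono : ∀ A ∈ W, ∀ B, A ⊆ B → B ⊆ Set.Iio lam.ord → B ∈ W := by
    intro A hA B hAB hB
    exact ⟨hB, hUmono _ hA.2 _ (fun ξ hξ => ⟨hξ.1, hAB hξ.2⟩) (hpresub _)⟩
  have hWinter : ∀ A ∈ W, ∀ B ∈ W, A ∩ B ∈ W := by
    intro A hA B hB
    refine ⟨fun ξ hξ => hA.1 hξ.1, ?_⟩
    have h1 : pre (A ∩ B) = pre A ∩ pre B := by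
      ext ξ
      exact ⟨fun h => ⟨⟨h.1, h.2.1⟩, ⟨h.1, h.2.2⟩⟩, fun h => ⟨h.1.1, h.1.2, h.2.2⟩⟩
    rw [h1]
    exact hUinter _ hA.2 _ hB.2
  have hWemp : ∅ ∉ W := by
    intro h
    have h1 : pre ∅ = ∅ := Set.ext fun ξ => ⟨fun hh => hh.2, fun hh => hh.elim⟩
    exact hUemp (h1 ▸ h.2)
  have hWult : ∀ A ⊆ Set.Iio lam.ord, A ∈ W ∨ Set.Iio lam.ord \ A ∈ W := by
    intro A hA
    rcases hUult (pre A) (hpresub A) with h | h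
    · exact Or.inl ⟨hA, h⟩
    · right
      refine ⟨Set.diff_subset, ?_⟩
      have h1 : pre (Set.Iio lam.ord \ A) = Set.Iio lam.ord \ pre A := by
        ext ξ
        constructor
        · rintro ⟨hξ, -, hfA⟩
          exact ⟨hξ, fun hc => hfA hc.2⟩
        · rintro ⟨hξ, hc⟩
          exact ⟨hξ, hf0b ξ hξ, fun hfA => hc ⟨hξ, hfA⟩⟩
      rw [h1]
      exact h
  have hWnp : ∀ x : Ordinal.{0}, ({x} : Set Ordinal.{0}) ∉ W := by
    intro x hx
    exact hf0nc x hx.2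
  have hWne : ∀ A ∈ W, A.Nonempty := by
    intro A hA
    obtain ⟨ξ, hξ⟩ := hUne _ hA.2
    exact ⟨f0 ξ, hξ.2⟩
  have hWcomp : ∀ S ⊆ W, #S < Cardinal.lift.{1} lam → (Set.Iio lam.ord ∩ ⋂₀ S) ∈ W := by
    intro S hS hSc
    set T := pre '' S with hT
    have hTU : T ⊆ U := by
      rintro _ ⟨A, hA, rfl⟩
      exact (hS hA).2
    have hTc : #T < Cardinal.lift.{1} lam := lt_of_le_of_lt Cardinal.mk_image_le hSc
    refine ⟨Set.inter_subset_left, ?_⟩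
    refine hUmono _ (hUcomp T hTU hTc) _ ?_ (hpresub _)
    rintro ξ ⟨hξ, hξT⟩
    refine ⟨hξ, hf0b ξ hξ, ?_⟩
    intro A hA
    exact (hξT _ ⟨A, hA, rfl⟩).2
  have hWregress : ∀ B ∈ W, ∀ g : Ordinal.{0} → Ordinal.{0}, (∀ ξ ∈ B, g ξ < ξ) →
      ∃ γ, {ξ | ξ < lam.ord ∧ g ξ = γ} ∈ W := by
    intro B hB g hg
    set h : Ordinal.{0} → Ordinal.{0} :=
      fun ξ => if g (f0 ξ) < f0 ξ then g (f0 ξ) else 0 with hhdef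
    have hzero : (0 : Ordinal.{0}) < lam.ord :=
      Cardinal.lt_ord.mpr (by simpa using hreg.pos)
    have hhb : ∀ ξ < lam.ord, h ξ < lam.ord := by
      intro ξ hξ
      by_cases hc : g (f0 ξ) < f0 ξ
      · simpa [hhdef, hc] using hc.trans (hf0b ξ hξ)
      · simpa [hhdef, hc] using hzero
    have hltU : {ξ | ξ < lam.ord ∧ h ξ < f0 ξ} ∈ U := by
      refine hUmono _ hB.2 _ ?_ (fun ξ hx => hx.1)
      intro ξ hξ
      have h1 : g (f0 ξ) < f0 ξ := hg _ hξ.2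
      refine ⟨hξ.1, ?_⟩
      simpa [hhdef, h1] using h1
    have hnotNC : ¬ NC h := fun hNCh => hf0min h hNCh hltU
    have hexγ : ∃ γ, {ξ | ξ < lam.ord ∧ h ξ = γ} ∈ U := by
      by_contra hcg
      push_neg at hcg
      exact hnotNC ⟨hhb, hcg⟩
    obtain ⟨γ, hγ⟩ := hexγ
    refine ⟨γ, fun ξ hξ => hξ.1, ?_⟩
    have hsub : {ξ | ξ < lam.ord ∧ h ξ = γ} ∩ pre B ⊆ pre {ξ' | ξ' < lam.ord ∧ g ξ' = γ} := by
      rintro ξ ⟨⟨hξ, hhγ⟩, hpB⟩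
      have h1 : g (f0 ξ) < f0 ξ := hg _ hpB.2
      refine ⟨hξ, hf0b ξ hξ, ?_⟩
      rw [← hhγ]
      simp [hhdef, h1]
    exact hUmono _ (hUinter _ hγ _ hB.2) _ hsub (hpresub _)
  have hWnormal : ∀ A : Ordinal.{0} → Set Ordinal.{0}, (∀ α, A α ∈ W) →
      {ξ | ξ < lam.ord ∧ ∀ α < ξ, ξ ∈ A α} ∈ W := by
    intro A hA
    set D := {ξ | ξ < lam.ord ∧ ∀ α < ξ, ξ ∈ A α} with hD
    rcases hWult D (fun ξ h => h.1) with h | h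
    · exact h
    · exfalso
      set g : Ordinal.{0} → Ordinal.{0} :=
        fun ξ => if hc : ∃ α, α < ξ ∧ ξ ∉ A α then hc.choose else 0 with hgdef
      have hex : ∀ ξ ∈ Set.Iio lam.ord \ D, ∃ α, α < ξ ∧ ξ ∉ A α := by
        intro ξ hξ
        by_contra hc
        push_neg at hc
        exact hξ.2 ⟨hξ.1, fun α hα => hc α hα⟩
      have hgB : ∀ ξ ∈ Set.Iio lam.ord \ D, g ξ < ξ := by
        intro ξ hξ
        have h1 := hex ξ hξ
        rw [hgdef]
        simp only [dif_pos h1]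
        exact h1.choose_spec.1
      obtain ⟨γ, hγW⟩ := hWregress _ h g hgB
      obtain ⟨ξ, ⟨⟨hξ1, hξ2⟩, hξB⟩, hξA⟩ :=
        hWne _ (hWinter _ (hWinter _ hγW _ h) _ (hA γ))
      have h1 := hex ξ hξB
      have h2 : g ξ = h1.choose := by rw [hgdef]; simp only [dif_pos h1]
      have h3 : h1.choose = γ := by rw [← h2, hξ2]
      exact (h3 ▸ h1.choose_spec.2) hξA
  exact ⟨W, hWsubs, hWtop, hWmono, hWinter, hWemp, hWult, hWnp, hWcomp, hWnormal⟩

end Stmt6Aux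

/-- The principal local filter at `α`. -/
def mkT (α : Ordinal.{0}) : LocalFilter := ⟨α, {α}, {{α}}⟩

lemma mkT_inj : Function.Injective mkT := fun a b h => congrArg LocalFilter.a h

/-- The family of principal local filters indexed by `C`. -/
def rcS (C : Set Ordinal.{0}) : Set LocalFilter := mkT '' C

lemma mem_fil_rcS (lam : Cardinal.{0}) (C A : Set Ordinal.{0}) :
    A ∈ fil lam (rcS C) ↔
      A ⊆ Set.Iio lam.ord ∧ ∃ ε < lam.ord, ∀ β ∈ C, ε ≤ β → β ∈ A := by
  constructor
  · rintro ⟨hA, ε, hε, hall⟩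
    refine ⟨hA, ε, hε, fun β hβ hεβ => ?_⟩
    have h1 := hall (mkT β) ⟨β, hβ, rfl⟩ hεβ
    have h2 : A ∩ ({β} : Set Ordinal.{0}) = {β} := h1
    rw [Set.inter_eq_right] at h2
    exact h2 rfl
  · rintro ⟨hA, ε, hε, hall⟩
    refine ⟨hA, ε, hε, ?_⟩
    rintro _ ⟨β, hβ, rfl⟩ hεβ
    show A ∩ ({β} : Set Ordinal.{0}) ∈ ({{β}} : Set (Set Ordinal.{0}))
    rw [Set.mem_singleton_iff, Set.inter_eq_right, Set.singleton_subset_iff]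
    exact hall β hβ hεβ

/-- If `lam` is measurable, then there are a system of local filters and a
`(<lam⁺)`-directed `H ⊆ Q⁰` generating an ultrafilter containing all clubs. -/
theorem stmt6 (lam : Cardinal.{0}) (hreg : lam.IsRegular) (hunc : ℵ₀ < lam)
    (hmeas : ∃ U : Set (Set Ordinal.{0}), IsUltraOn U (Set.Iio lam.ord) ∧
      (∀ x : Ordinal.{0}, ({x} : Set Ordinal.{0}) ∉ U) ∧
      ∀ S : Set (Set Ordinal.{0}), S ⊆ U → #S < Cardinal.lift.{1} lam →
        (Set.Iio lam.ord ∩ ⋂₀ S) ∈ U) :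
    ∃ F : Set LocalFilter, IsLFS lam F ∧
      ∃ H ⊆ Qzero lam F,
        (∀ H₀ ⊆ H, #H₀ ≤ Cardinal.lift.{1} lam →
          ∃ q ∈ H, ∀ r ∈ H₀, fil lam r ⊆ fil lam q) ∧
        IsUltraOn (filH lam H) (Set.Iio lam.ord) ∧
        (∀ C, IsClub lam C → C ∈ filH lam H) ∧
        ¬ WeaklyReasonable lam (filH lam H) := by
  classical
  obtain ⟨W, hW⟩ := exists_nice lam hreg hunc hmeas
  have hzero : (0 : Ordinal.{0}) < lam.ord := Cardinal.lt_ord.mpr (by simpa using hreg.pos)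
  have honelt : (1 : Cardinal.{1}) < Cardinal.lift.{1} lam := by
    refine lt_of_lt_of_le Cardinal.one_lt_aleph0 ?_
    simpa using Cardinal.lift_le.{1}.mpr hunc.le
  set Fs : Set LocalFilter := {t | t.a < lam.ord ∧ t.Z = {t.a} ∧ t.F = {{t.a}}} with hFs
  set H : Set (Set LocalFilter) := rcS '' W with hH
  -- Fs is a system of local filters
  have hLFS : IsLFS lam Fs := by
    constructor
    · rintro t ⟨hta, htZ, htF⟩
      refine ⟨?_, ?_, ?_, ?_⟩
      · rw [htZ]; simpa using hta
      · rw [htZ]; simpa using honelt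
      · rw [htZ]; exact ⟨rfl, fun b hb => le_of_eq hb.symm⟩
      · rw [htZ, htF]
        refine ⟨?_, rfl, ?_, ?_, ?_⟩
        · rintro A rfl; exact Set.Subset.rfl
        · rintro A rfl B hAB hB; exact subset_antisymm hB hAB
        · rintro A rfl B rfl; simp
        · intro h
          exact (Set.singleton_ne_empty t.a) ((Set.mem_singleton_iff.mp h).symm)
    · intro β hβ
      exact ⟨mkT β, ⟨hβ, rfl, rfl⟩, le_rfl⟩
  -- each rcS C for C ∈ W is in Qzero
  have hQ : ∀ C ∈ W, rcS C ∈ Qzero lam Fs := by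
    intro C hC
    refine ⟨⟨?_, ?_, ?_⟩, ?_, ?_⟩
    · rintro _ ⟨β, hβ, rfl⟩
      exact ⟨hW.subs C hC hβ, rfl, rfl⟩
    · rw [show (#(rcS C) : Cardinal.{1}) = #C from Cardinal.mk_image_eq mkT_inj]
      exact hW.uniform hC
    · intro ξ
      refine lt_of_le_of_lt ?_ honelt
      have hsub : {t | t ∈ rcS C ∧ t.a = ξ} ⊆ ({mkT ξ} : Set LocalFilter) := by
        rintro t ⟨⟨β, hβ, rfl⟩, hta⟩
        simp only [Set.mem_singleton_iff]
        rw [show β = ξ from hta]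
      simpa using Cardinal.mk_le_mk_of_subset hsub
    · rintro _ ⟨β, hβ, rfl⟩ _ ⟨γ, hγ, rfl⟩ hab
      rw [show β = γ from hab]
    · rintro _ ⟨β, hβ, rfl⟩ _ ⟨γ, hγ, rfl⟩ hab
      intro x hx
      rw [Set.mem_singleton_iff.mp hx]
      exact hab
  have hHQ : H ⊆ Qzero lam Fs := by
    rintro _ ⟨C, hC, rfl⟩
    exact hQ C hC
  -- filH is exactly W
  have hfilH : filH lam H = W := by
    ext A
    constructor
    · rintro ⟨r, ⟨C, hC, rfl⟩, hA⟩
      rw [mem_fil_rcS] at hA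
      obtain ⟨hA1, ε, hε, hcond⟩ := hA
      have h1 : C ∩ {ξ | ξ < lam.ord ∧ ε < ξ} ∈ W :=
        hW.inter _ hC _ (hW.cobdd hunc hε)
      refine hW.mono _ h1 _ ?_ hA1
      rintro ξ ⟨hξC, -, hξ2⟩
      exact hcond ξ hξC hξ2.le
    · intro hA
      refine ⟨rcS A, ⟨A, hA, rfl⟩, (mem_fil_rcS lam A A).mpr ⟨hW.subs A hA, 0, hzero, ?_⟩⟩
      exact fun β hβ _ => hβ
  refine ⟨Fs, hLFS, H, hHQ, ?_, ?_, ?_, ?_⟩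
  · -- directedness
    intro H0 hH0 hcard
    have hch : ∀ r ∈ H0, ∃ C, C ∈ W ∧ rcS C = r := fun r hr => hH0 hr
    choose! Cof hCof1 hCof2 using hch
    set Cs : Set (Set Ordinal.{0}) := Cof '' H0 with hCs
    have hCsW : Cs ⊆ W := by rintro _ ⟨r, hr, rfl⟩; exact hCof1 r hr
    have hCscard : #Cs ≤ Cardinal.lift.{1} lam :=
      le_trans Cardinal.mk_image_le hcard
    have hle : #Cs ≤ #(Set.Iio lam.ord) := by
      rw [Ordinal.mk_Iio_ordinal, Cardinal.card_ord]
      exact hCscard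
    obtain ⟨ι⟩ := (Cardinal.le_def _ _).mp hle
    set e : Ordinal.{0} → Set Ordinal.{0} := fun β =>
      if h : ∃ c : ↥Cs, ((ι c : ↥(Set.Iio lam.ord)) : Ordinal.{0}) = β
      then ((h.choose : ↥Cs) : Set Ordinal.{0}) else Set.Iio lam.ord with he
    have heW : ∀ β, e β ∈ W := by
      intro β
      by_cases h : ∃ c : ↥Cs, ((ι c : ↥(Set.Iio lam.ord)) : Ordinal.{0}) = β
      · rw [he]; simp only [dif_pos h]; exact hCsW h.choose.2
      · rw [he]; simp only [dif_neg h]; exact hW.top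
    have hecov : ∀ C ∈ Cs, ∃ α < lam.ord, e α = C := by
      intro C hC
      refine ⟨(ι ⟨C, hC⟩ : ↥(Set.Iio lam.ord)), (ι ⟨C, hC⟩).2, ?_⟩
      have hex : ∃ c : ↥Cs, ((ι c : ↥(Set.Iio lam.ord)) : Ordinal.{0}) =
          ((ι ⟨C, hC⟩ : ↥(Set.Iio lam.ord)) : Ordinal.{0}) := ⟨⟨C, hC⟩, rfl⟩
      rw [he]
      simp only [dif_pos hex]
      have h1 : ι hex.choose = ι ⟨C, hC⟩ := Subtype.coe_injective hex.choose_spec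
      rw [ι.injective h1]
    set D := {ξ | ξ < lam.ord ∧ ∀ α < ξ, ξ ∈ e α} with hD
    have hDW : D ∈ W := hW.normal e heW
    refine ⟨rcS D, ⟨D, hDW, rfl⟩, ?_⟩
    intro r hr
    rw [← hCof2 r hr]
    intro A hA
    rw [mem_fil_rcS] at hA ⊢
    obtain ⟨hA1, ε, hε, hcond⟩ := hA
    obtain ⟨α, hα, heα⟩ := hecov (Cof r) ⟨r, hr, rfl⟩
    have hα1 : α + 1 < lam.ord := by
      rw [Ordinal.add_one_eq_succ]
      exact (Cardinal.isSuccLimit_ord hunc.le).succ_lt hα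
    refine ⟨hA1, max ε (α + 1), max_lt hε hα1, ?_⟩
    intro β hβD hβge
    have hβC : β ∈ Cof r := by
      have hαβ : α < β := lt_of_lt_of_le
        (by simpa using (add_lt_add_iff_left α).mpr zero_lt_one)
        (le_trans (le_max_right _ _) hβge)
      have := hβD.2 α hαβ
      rwa [heα] at this
    exact hcond β hβC (le_trans (le_max_left _ _) hβge)
  · rw [hfilH]
    exact ⟨⟨hW.subs, hW.top, hW.mono, hW.inter, hW.emp⟩, hW.ultra⟩
  · intro C hC
    rw [hfilH]
    exact hW.club hunc hC
  · intro hWR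
    obtain ⟨C, hC, hnot⟩ := hWR (fun δ => δ) (fun δ h => h) (fun δ δ' h _ => h)
      (fun β hβ => ⟨β, hβ, le_rfl⟩)
    apply hnot
    rw [hfilH]
    have hsub : (⋃ δ ∈ C, Set.Ico δ (δ + δ)) ⊆ Set.Iio lam.ord := by
      intro x hx
      simp only [Set.mem_iUnion] at hx
      obtain ⟨δ, hδC, hx1, hx2⟩ := hx
      have hδ : δ < lam.ord := hC.1 hδC
      have hδδ : δ + δ < lam.ord := by
        refine Cardinal.lt_ord.mpr ?_
        rw [Ordinal.card_add]
        exact Cardinal.add_lt_of_lt hunc.le (Cardinal.lt_ord.mp hδ) (Cardinal.lt_ord.mp hδ)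
      exact Set.mem_Iio.mpr (hx2.trans hδδ)
    have hmem : C ∩ {ξ | ξ < lam.ord ∧ 0 < ξ} ⊆ ⋃ δ ∈ C, Set.Ico δ (δ + δ) := by
      rintro δ ⟨hδC, -, hδpos⟩
      refine Set.mem_biUnion hδC ⟨le_rfl, ?_⟩
      simpa using (add_lt_add_iff_left δ).mpr hδpos
    exact hW.mono _ (hW.inter _ (hW.club hunc hC) _ (hW.cobdd hunc hzero)) _ hmem hsub

end

end RS889
end
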